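/- arXiv:2601.00979 — 3 statements merged into one kernel-verified Lean document; each statement's English description precedes it below -/
import Mathlib

section
/- The constant C satisfies C = 1/2 − (1/(2·ζ(3)))·Σ_{x > y ≥ 1} 1/(y·(x+y)²), where the sum ranges over all pairs of positive integers x > y and ζ(3) = Σ_{m ≥ 1} 1/m³. -/
/-- The constant `C = Σ_{x > y ≥ 1, gcd(x,y)=1} (2x+y) / (2x²(x+y)²)`. -/
noncomputable def constC : ℝ :=
  ∑' p : ℕ × ℕ,
    if p.2 < p.1 ∧ 1 ≤ p.2 ∧ Nat.gcd p.1 p.2 = 1 then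
      (2 * (p.1 : ℝ) + p.2) / (2 * (p.1 : ℝ) ^ 2 * ((p.1 : ℝ) + p.2) ^ 2)
    else 0

/-- `ζ(3) = Σ_{m ≥ 1} 1/m³`. -/
noncomputable def zetaThree : ℝ := ∑' m : ℕ, if 1 ≤ m then 1 / (m : ℝ) ^ 3 else 0

open Filter Topology ENNReal
open Filter Topology

noncomputable def Hh (m : ℕ) : ℝ := ∑ k ∈ Finset.range m, 1/(k+1 : ℝ)

lemma Hh_add (a b : ℕ) : Hh (a + b) = Hh a + ∑ k ∈ Finset.range b, 1/((a:ℝ)+k+1) := by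
  rw [Hh, Finset.sum_range_add]
  congr 1
  apply Finset.sum_congr rfl
  intro k _
  push_cast
  ring_nf

lemma hasSum_tele (m : ℕ) (hm : 1 ≤ m) :
    HasSum (fun n : ℕ => if 1 ≤ n then 1/((m:ℝ)*n*(n+m)) else 0) (Hh m / m^2) := by
  have hm0 : (m:ℝ) ≠ 0 := by positivity
  set f : ℕ → ℝ := fun n => if 1 ≤ n then 1/((m:ℝ)*n*(n+m)) else 0 with hf
  rw [← hasSum_nat_add_iff' 1]
  have h0 : ∑ i ∈ Finset.range 1, f i = 0 := by simp [hf]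
  rw [h0, sub_zero]
  have hfs : (fun n : ℕ => f (n + 1)) = fun n : ℕ => 1/((m:ℝ)*(n+1)*((n:ℝ)+1+m)) := by
    funext n
    simp only [hf]
    rw [if_pos (by omega)]
    push_cast
    ring_nf
  rw [hfs]
  rw [hasSum_iff_tendsto_nat_of_nonneg (by intro n; positivity)]
  have key : ∀ N : ℕ, ∑ n ∈ Finset.range N, 1/((m:ℝ)*(n+1)*((n:ℝ)+1+m))
      = (1/m^2) * (Hh m - (Hh (N + m) - Hh N)) := by
    intro N
    have e1 : ∀ n : ℕ, 1/((m:ℝ)*(n+1)*((n:ℝ)+1+m))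
        = (1/(m:ℝ)^2) * (1/((n:ℝ)+1) - 1/((n:ℝ)+m+1)) := by
      intro n
      have h1 : ((n:ℝ)+1) ≠ 0 := by positivity
      have h2 : ((n:ℝ)+m+1) ≠ 0 := by positivity
      field_simp
      ring
    simp only [e1, ← Finset.mul_sum]
    congr 1
    rw [Finset.sum_sub_distrib]
    have e2 : Hh (N + m) = Hh N + ∑ k ∈ Finset.range m, 1/((N:ℝ)+k+1) := Hh_add N m
    have e3 : Hh (m + N) = Hh m + ∑ k ∈ Finset.range N, 1/((m:ℝ)+k+1) := Hh_add m N
    have e4 : ∑ n ∈ Finset.range N, 1/((n:ℝ)+1) = Hh N := by simp [Hh]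
    have e5 : ∑ n ∈ Finset.range N, 1/((n:ℝ)+m+1) = ∑ k ∈ Finset.range N, 1/((m:ℝ)+k+1) := by
      apply Finset.sum_congr rfl; intro k _; ring_nf
    rw [e4, e5]
    have : Hh (N + m) = Hh (m + N) := by rw [Nat.add_comm]
    rw [e2] at this
    rw [e3] at this
    linarith
  simp only [key]
  have ht : Tendsto (fun N : ℕ => Hh (N + m) - Hh N) atTop (𝓝 0) := by
    have hb : ∀ N : ℕ, Hh (N + m) - Hh N ≤ (m:ℝ) * (1/((N:ℝ)+1)) := by
      intro N
      rw [Hh_add]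
      have : ∀ k ∈ Finset.range m, 1/((N:ℝ)+k+1) ≤ 1/((N:ℝ)+1) := by
        intro k _
        apply one_div_le_one_div_of_le (by positivity)
        have : (0:ℝ) ≤ k := by positivity
        linarith
      calc Hh N + ∑ k ∈ Finset.range m, 1/((N:ℝ)+k+1) - Hh N
          = ∑ k ∈ Finset.range m, 1/((N:ℝ)+k+1) := by ring
        _ ≤ ∑ _k ∈ Finset.range m, 1/((N:ℝ)+1) := Finset.sum_le_sum this
        _ = (m:ℝ) * (1/((N:ℝ)+1)) := by simp [mul_comm]
    have hnn : ∀ N : ℕ, 0 ≤ Hh (N + m) - Hh N := by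
      intro N
      rw [Hh_add]
      have : (0:ℝ) ≤ ∑ k ∈ Finset.range m, 1/((N:ℝ)+k+1) := by positivity
      linarith
    apply squeeze_zero hnn hb
    have := tendsto_one_div_add_atTop_nhds_zero_nat (𝕜 := ℝ)
    have := this.const_mul (m:ℝ)
    simpa using this
  have ht2 : Tendsto (fun N : ℕ => Hh m - (Hh (N+m) - Hh N)) atTop (𝓝 (Hh m - 0)) :=
    Tendsto.sub tendsto_const_nhds ht
  have ht3 := ht2.const_mul (1/(m:ℝ)^2)
  have : Hh m / (m:ℝ)^2 = (1/(m:ℝ)^2) * (Hh m - 0) := by ring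
  rw [this]
  exact ht3


/-- real summand of C -/
noncomputable def cR (p : ℕ × ℕ) : ℝ :=
  if p.2 < p.1 ∧ 1 ≤ p.2 ∧ Nat.gcd p.1 p.2 = 1 then
    (2 * (p.1 : ℝ) + p.2) / (2 * (p.1 : ℝ) ^ 2 * ((p.1 : ℝ) + p.2) ^ 2) else 0

noncomputable def gR (p : ℕ × ℕ) : ℝ :=
  if p.2 < p.1 ∧ 1 ≤ p.2 then
    (2 * (p.1 : ℝ) + p.2) / (2 * (p.1 : ℝ) ^ 2 * ((p.1 : ℝ) + p.2) ^ 2) else 0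

noncomputable def aR (p : ℕ × ℕ) : ℝ :=
  if p.2 < p.1 ∧ 1 ≤ p.2 then 1 / ((p.2 : ℝ) * (p.1 : ℝ) ^ 2) else 0

noncomputable def bR (p : ℕ × ℕ) : ℝ :=
  if p.2 < p.1 ∧ 1 ≤ p.2 then 1 / ((p.2 : ℝ) * ((p.1 : ℝ) + p.2) ^ 2) else 0

noncomputable def tR (p : ℕ × ℕ) : ℝ :=
  if 1 ≤ p.1 ∧ 1 ≤ p.2 then 1 / ((p.1 : ℝ) * p.2 * ((p.1 : ℝ) + p.2)) else 0

noncomputable def zR (m : ℕ) : ℝ := if 1 ≤ m then 1 / (m : ℝ) ^ 3 else 0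

noncomputable def SC : ℝ≥0∞ := ∑' p, ENNReal.ofReal (cR p)
noncomputable def SG : ℝ≥0∞ := ∑' p, ENNReal.ofReal (gR p)
noncomputable def SA : ℝ≥0∞ := ∑' p, ENNReal.ofReal (aR p)
noncomputable def SB : ℝ≥0∞ := ∑' p, ENNReal.ofReal (bR p)
noncomputable def TS : ℝ≥0∞ := ∑' p, ENNReal.ofReal (tR p)
noncomputable def SZ : ℝ≥0∞ := ∑' m, ENNReal.ofReal (zR m)

lemma tsum_eq_toReal {ι : Type*} (f : ι → ℝ) (hf : ∀ i, 0 ≤ f i) :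
    ∑' i, f i = (∑' i, ENNReal.ofReal (f i)).toReal := by
  rw [ENNReal.tsum_toReal_eq (fun i => ENNReal.ofReal_ne_top)]
  exact tsum_congr fun i => (ENNReal.toReal_ofReal (hf i)).symm

lemma cR_nonneg (p : ℕ × ℕ) : 0 ≤ cR p := by unfold cR; split <;> positivity
lemma gR_nonneg (p : ℕ × ℕ) : 0 ≤ gR p := by unfold gR; split <;> positivity
lemma aR_nonneg (p : ℕ × ℕ) : 0 ≤ aR p := by unfold aR; split <;> positivity
lemma bR_nonneg (p : ℕ × ℕ) : 0 ≤ bR p := by unfold bR; split <;> positivity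
lemma zR_nonneg (m : ℕ) : 0 ≤ zR m := by unfold zR; split <;> positivity

lemma zR_summable : Summable zR := by
  apply Summable.of_nonneg_of_le zR_nonneg (f := fun n : ℕ => 1 / (n : ℝ) ^ 3)
  · intro n; unfold zR; split
    · exact le_rfl
    · positivity
  · exact Real.summable_one_div_nat_pow.mpr (by norm_num)


lemma SZ_ne_top : SZ ≠ ∞ := by
  rw [SZ, ← ENNReal.ofReal_tsum_of_nonneg zR_nonneg zR_summable]
  exact ENNReal.ofReal_ne_top

lemma SZ_ne_zero : SZ ≠ 0 := by
  have h1 : ENNReal.ofReal (zR 1) ≤ SZ := ENNReal.le_tsum 1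
  have : zR 1 = 1 := by norm_num [zR]
  rw [this] at h1
  simp only [ENNReal.ofReal_one] at h1
  intro h
  rw [h] at h1
  simp at h1

lemma P1 (x y : ℕ) (hy : 1 ≤ y) (hxy : y < x) :
    2 * ((2 * (x : ℝ) + y) / (2 * (x : ℝ) ^ 2 * ((x : ℝ) + y) ^ 2))
      + 1 / ((y : ℝ) * ((x : ℝ) + y) ^ 2) = 1 / ((y : ℝ) * (x : ℝ) ^ 2) := by
  have hx0 : 0 < x := by omega
  have hx' : (0:ℝ) < x := by exact_mod_cast hx0
  have hy' : (0:ℝ) < y := by exact_mod_cast hy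
  have h2 : ((x:ℝ) + y) ≠ 0 := by positivity
  field_simp
  ring

lemma P2 (m n : ℕ) (hm : 1 ≤ m) (hn : 1 ≤ n) :
    1 / ((m : ℝ) * ((m : ℝ) + n) ^ 2) + 1 / ((n : ℝ) * ((m : ℝ) + n) ^ 2)
      = 1 / ((m : ℝ) * n * ((m : ℝ) + n)) := by
  have hm' : (0:ℝ) < m := by exact_mod_cast hm
  have hn' : (0:ℝ) < n := by exact_mod_cast hn
  have h1 : ((m:ℝ) + n) ≠ 0 := by positivity
  field_simp
  ring

lemma P3 (d x y : ℕ) (hd : 1 ≤ d) (hy : 1 ≤ y) (hxy : y < x) :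
    (2 * ((d*x : ℕ) : ℝ) + ((d*y : ℕ) : ℝ)) /
        (2 * ((d*x : ℕ) : ℝ) ^ 2 * (((d*x : ℕ) : ℝ) + ((d*y : ℕ) : ℝ)) ^ 2)
      = (1 / (d : ℝ) ^ 3) *
        ((2 * (x : ℝ) + y) / (2 * (x : ℝ) ^ 2 * ((x : ℝ) + y) ^ 2)) := by
  have hd' : (0:ℝ) < d := by exact_mod_cast hd
  have hy' : (0:ℝ) < y := by exact_mod_cast hy
  have hx0 : 0 < x := by omega
  have hx' : (0:ℝ) < x := by exact_mod_cast hx0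
  push_cast
  have h2 : ((x:ℝ) + y) ≠ 0 := by positivity
  field_simp

noncomputable def uR1 (q : ℕ × ℕ) : ℝ :=
  if 1 ≤ q.1 ∧ 1 ≤ q.2 then 1 / ((q.1 : ℝ) * ((q.1 : ℝ) + q.2) ^ 2) else 0

noncomputable def uR2 (q : ℕ × ℕ) : ℝ :=
  if 1 ≤ q.1 ∧ 1 ≤ q.2 then 1 / ((q.2 : ℝ) * ((q.1 : ℝ) + q.2) ^ 2) else 0

lemma bij1 : ∑' q, ENNReal.ofReal (uR1 q) = SA := by
  rw [SA]
  symm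
  apply tsum_eq_tsum_of_ne_zero_bij (fun q => (q.1.1 + q.1.2, q.1.1))
  · intro q1 q2 h
    simp only [Prod.mk.injEq] at h
    apply Subtype.ext
    have h1 := h.2
    have h2 := h.1
    ext
    · omega
    · omega
  · rintro ⟨x, y⟩ hp
    have hcond : y < x ∧ 1 ≤ y := by
      by_contra h
      simp only [Function.mem_support, aR, if_neg h, ENNReal.ofReal_zero, ne_eq,
        not_true_eq_false] at hp
    obtain ⟨hyx, hy⟩ := hcond
    refine ⟨⟨(y, x - y), ?_⟩, ?_⟩
    · simp only [Function.mem_support, uR1, ne_eq]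
      rw [if_pos ⟨hy, by omega⟩]
      have hxx : ((y:ℝ) + ((x - y : ℕ) : ℝ)) = (x : ℝ) := by
        have : ((x - y : ℕ) : ℝ) = (x : ℝ) - y := by
          push_cast [Nat.cast_sub hyx.le]; ring
        rw [this]; ring
      rw [hxx]
      have hy' : (0:ℝ) < y := by exact_mod_cast hy
      have h0 : 0 < x := by omega
      have hx' : (0:ℝ) < x := by exact_mod_cast h0
      have : (0:ℝ) < 1 / ((y:ℝ) * (x:ℝ)^2) := by positivity
      exact (ENNReal.ofReal_pos.mpr this).ne'
    · simp only []
      ext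
      · simp; omega
      · simp
  · rintro ⟨⟨m, n⟩, hq⟩
    have hcond : 1 ≤ m ∧ 1 ≤ n := by
      by_contra h
      simp only [Function.mem_support, uR1, if_neg h, ENNReal.ofReal_zero, ne_eq,
        not_true_eq_false] at hq
    simp only [aR, uR1, if_pos hcond]
    rw [if_pos ⟨by omega, hcond.1⟩]
    congr 1
    push_cast
    ring_nf

lemma bij2 : ∑' q, ENNReal.ofReal (uR2 q) = SA := by
  rw [SA]
  symm
  apply tsum_eq_tsum_of_ne_zero_bij (fun q => (q.1.1 + q.1.2, q.1.2))
  · intro q1 q2 h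
    simp only [Prod.mk.injEq] at h
    apply Subtype.ext
    ext
    · omega
    · omega
  · rintro ⟨x, y⟩ hp
    have hcond : y < x ∧ 1 ≤ y := by
      by_contra h
      simp only [Function.mem_support, aR, if_neg h, ENNReal.ofReal_zero, ne_eq,
        not_true_eq_false] at hp
    obtain ⟨hyx, hy⟩ := hcond
    refine ⟨⟨(x - y, y), ?_⟩, ?_⟩
    · simp only [Function.mem_support, uR2, ne_eq]
      rw [if_pos ⟨by omega, hy⟩]
      have hxx : (((x - y : ℕ) : ℝ) + (y:ℝ)) = (x : ℝ) := by
        have : ((x - y : ℕ) : ℝ) = (x : ℝ) - y := by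
          push_cast [Nat.cast_sub hyx.le]; ring
        rw [this]; ring
      rw [hxx]
      have hy' : (0:ℝ) < y := by exact_mod_cast hy
      have h0 : 0 < x := by omega
      have hx' : (0:ℝ) < x := by exact_mod_cast h0
      have : (0:ℝ) < 1 / ((y:ℝ) * (x:ℝ)^2) := by positivity
      exact (ENNReal.ofReal_pos.mpr this).ne'
    · simp only []
      ext
      · simp; omega
      · simp
  · rintro ⟨⟨m, n⟩, hq⟩
    have hcond : 1 ≤ m ∧ 1 ≤ n := by
      by_contra h
      simp only [Function.mem_support, uR2, if_neg h, ENNReal.ofReal_zero, ne_eq,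
        not_true_eq_false] at hq
    simp only [aR, uR2, if_pos hcond]
    rw [if_pos ⟨by omega, hcond.2⟩]
    congr 1
    push_cast
    ring_nf

noncomputable def wR (r : ℕ × (ℕ × ℕ)) : ℝ :=
  if 1 ≤ r.1 ∧ r.2.2 < r.2.1 ∧ 1 ≤ r.2.2 ∧ Nat.gcd r.2.1 r.2.2 = 1 then
    (1 / (r.1 : ℝ) ^ 3) *
      ((2 * (r.2.1 : ℝ) + r.2.2) / (2 * (r.2.1 : ℝ) ^ 2 * ((r.2.1 : ℝ) + r.2.2) ^ 2))
  else 0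

lemma wR_nonneg (r : ℕ × (ℕ × ℕ)) : 0 ≤ wR r := by unfold wR; split <;> positivity

lemma bij3 : ∑' r, ENNReal.ofReal (wR r) = SG := by
  rw [SG]
  symm
  apply tsum_eq_tsum_of_ne_zero_bij (fun r => (r.1.1 * r.1.2.1, r.1.1 * r.1.2.2))
  · rintro ⟨⟨d1, x1, y1⟩, h1⟩ ⟨⟨d2, x2, y2⟩, h2⟩ h
    have hc1 : 1 ≤ d1 ∧ y1 < x1 ∧ 1 ≤ y1 ∧ Nat.gcd x1 y1 = 1 := by
      by_contra hc
      simp only [Function.mem_support, wR, if_neg hc, ENNReal.ofReal_zero, ne_eq,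
        not_true_eq_false] at h1
    have hc2 : 1 ≤ d2 ∧ y2 < x2 ∧ 1 ≤ y2 ∧ Nat.gcd x2 y2 = 1 := by
      by_contra hc
      simp only [Function.mem_support, wR, if_neg hc, ENNReal.ofReal_zero, ne_eq,
        not_true_eq_false] at h2
    simp only [Prod.mk.injEq] at h
    obtain ⟨hx, hy⟩ := h
    have hg : Nat.gcd (d1 * x1) (d1 * y1) = Nat.gcd (d2 * x2) (d2 * y2) := by rw [hx, hy]
    rw [Nat.gcd_mul_left, Nat.gcd_mul_left, hc1.2.2.2, hc2.2.2.2, mul_one, mul_one] at hg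
    apply Subtype.ext
    have hd : d1 = d2 := hg
    subst hd
    have hx' : x1 = x2 := by
      have := Nat.eq_of_mul_eq_mul_left (by omega : 0 < d1) hx
      exact this
    have hy' : y1 = y2 := Nat.eq_of_mul_eq_mul_left (by omega : 0 < d1) hy
    simp [hx', hy']
  · rintro ⟨X, Y⟩ hp
    have hcond : Y < X ∧ 1 ≤ Y := by
      by_contra h
      simp only [Function.mem_support, gR, if_neg h, ENNReal.ofReal_zero, ne_eq,
        not_true_eq_false] at hp
    obtain ⟨hyx, hy⟩ := hcond
    set d := Nat.gcd X Y with hd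
    have hdpos : 0 < d := Nat.gcd_pos_of_pos_right X (by omega)
    have hXd : d * (X / d) = X := Nat.mul_div_cancel' (Nat.gcd_dvd_left X Y)
    have hYd : d * (Y / d) = Y := Nat.mul_div_cancel' (Nat.gcd_dvd_right X Y)
    have hcop : Nat.gcd (X / d) (Y / d) = 1 := Nat.coprime_div_gcd_div_gcd hdpos
    have hy1 : 1 ≤ Y / d := by
      rcases Nat.eq_zero_or_pos (Y / d) with h | h
      · rw [h, mul_zero] at hYd; omega
      · exact h
    have hyx1 : Y / d < X / d := by
      by_contra h
      push_neg at h
      have : X ≤ Y := by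
        calc X = d * (X / d) := hXd.symm
          _ ≤ d * (Y / d) := Nat.mul_le_mul_left d h
          _ = Y := hYd
      omega
    refine ⟨⟨(d, (X / d, Y / d)), ?_⟩, ?_⟩
    · simp only [Function.mem_support, wR, ne_eq]
      rw [if_pos ⟨hdpos, hyx1, hy1, hcop⟩]
      have h1 : (0:ℝ) < d := by exact_mod_cast hdpos
      have h2 : (0:ℝ) < (X / d : ℕ) := by
        have : 0 < X / d := by omega
        exact_mod_cast this
      have h3 : (0:ℝ) < (Y / d : ℕ) := by exact_mod_cast hy1
      have : (0:ℝ) < (1 / (d : ℝ) ^ 3) *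
          ((2 * ((X/d : ℕ) : ℝ) + ((Y/d : ℕ) : ℝ)) /
            (2 * ((X/d : ℕ) : ℝ) ^ 2 * (((X/d : ℕ) : ℝ) + ((Y/d : ℕ) : ℝ)) ^ 2)) := by
        positivity
      exact (ENNReal.ofReal_pos.mpr this).ne'
    · simp only []
      ext
      · simp [hXd]
      · simp [hYd]
  · rintro ⟨⟨d, x, y⟩, hr⟩
    have hc : 1 ≤ d ∧ y < x ∧ 1 ≤ y ∧ Nat.gcd x y = 1 := by
      by_contra hc
      simp only [Function.mem_support, wR, if_neg hc, ENNReal.ofReal_zero, ne_eq,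
        not_true_eq_false] at hr
    obtain ⟨hd, hyx, hy, _⟩ := hc
    simp only [gR, wR]
    rw [if_pos ⟨(mul_lt_mul_iff_right₀ (show 0 < d by omega)).mpr hyx, Nat.mul_pos (by omega) (by omega)⟩]
    rw [if_pos ⟨hd, hyx, hy, ‹Nat.gcd x y = 1›⟩]
    rw [P3 d x y hd hy hyx]

lemma SG_eq : SG = SZ * SC := by
  rw [← bij3]
  have hpt : ∀ r : ℕ × (ℕ × ℕ),
      ENNReal.ofReal (wR r) = ENNReal.ofReal (zR r.1) * ENNReal.ofReal (cR r.2) := by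
    rintro ⟨d, x, y⟩
    by_cases hd : 1 ≤ d
    · by_cases hq : y < x ∧ 1 ≤ y ∧ Nat.gcd x y = 1
      · have : wR (d, x, y) = zR d * cR (x, y) := by
          simp only [wR, zR, cR]
          rw [if_pos ⟨hd, hq.1, hq.2.1, hq.2.2⟩, if_pos hd, if_pos hq]
        rw [this, ENNReal.ofReal_mul (zR_nonneg d)]
      · have h1 : wR (d, x, y) = 0 := by
          simp only [wR]
          rw [if_neg (by tauto)]
        have h2 : cR (x, y) = 0 := by simp only [cR]; rw [if_neg hq]
        rw [h1, h2, ENNReal.ofReal_zero, mul_zero]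
    · have h1 : wR (d, x, y) = 0 := by
        simp only [wR]
        rw [if_neg (by tauto)]
      have h2 : zR d = 0 := by simp only [zR]; rw [if_neg hd]
      rw [h1, h2, ENNReal.ofReal_zero, zero_mul]
  calc ∑' r : ℕ × (ℕ × ℕ), ENNReal.ofReal (wR r)
      = ∑' r : ℕ × (ℕ × ℕ), ENNReal.ofReal (zR r.1) * ENNReal.ofReal (cR r.2) :=
        tsum_congr hpt
    _ = ∑' (d : ℕ), ∑' (q : ℕ × ℕ), ENNReal.ofReal (zR d) * ENNReal.ofReal (cR q) :=
        ENNReal.tsum_prod'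
    _ = ∑' (d : ℕ), ENNReal.ofReal (zR d) * SC := by
        apply tsum_congr; intro d; rw [ENNReal.tsum_mul_left]; rfl
    _ = SZ * SC := by rw [ENNReal.tsum_mul_right]; rfl

lemma split_eq : 2 * SG + SB = SA := by
  have hpt : ∀ p : ℕ × ℕ,
      2 * ENNReal.ofReal (gR p) + ENNReal.ofReal (bR p) = ENNReal.ofReal (aR p) := by
    rintro ⟨x, y⟩
    by_cases hc : y < x ∧ 1 ≤ y
    · have h2 : (2 : ℝ≥0∞) * ENNReal.ofReal (gR (x, y)) = ENNReal.ofReal (2 * gR (x, y)) := by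
        rw [ENNReal.ofReal_mul (by norm_num : (0:ℝ) ≤ 2)]
        norm_num
      rw [h2, ← ENNReal.ofReal_add (mul_nonneg (by norm_num) (gR_nonneg _)) (bR_nonneg _)]
      congr 1
      simp only [gR, bR, aR, if_pos hc]
      exact P1 x y hc.2 hc.1
    · simp only [gR, bR, aR, if_neg hc, ENNReal.ofReal_zero, mul_zero, add_zero]
  calc 2 * SG + SB = ∑' p, (2 * ENNReal.ofReal (gR p)) + SB := by
        rw [SG, ENNReal.tsum_mul_left]
    _ = ∑' p, (2 * ENNReal.ofReal (gR p) + ENNReal.ofReal (bR p)) := by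
        rw [SB, ENNReal.tsum_add]
    _ = SA := by rw [SA]; exact tsum_congr hpt

lemma TS_eq_two_SA : TS = SA + SA := by
  have hpt : ∀ q : ℕ × ℕ,
      ENNReal.ofReal (tR q) = ENNReal.ofReal (uR1 q) + ENNReal.ofReal (uR2 q) := by
    rintro ⟨m, n⟩
    by_cases hc : 1 ≤ m ∧ 1 ≤ n
    · rw [← ENNReal.ofReal_add (by unfold uR1; split <;> positivity) (by unfold uR2; split <;> positivity)]
      congr 1
      simp only [tR, uR1, uR2, if_pos hc]
      exact (P2 m n hc.1 hc.2).symm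
    · simp only [tR, uR1, uR2, if_neg hc, ENNReal.ofReal_zero, add_zero]
  have h : SA + SA = (∑' q, ENNReal.ofReal (uR1 q)) + ∑' q, ENNReal.ofReal (uR2 q) := by
    rw [bij1, bij2]
  rw [TS, h, ← ENNReal.tsum_add]
  exact tsum_congr hpt

noncomputable def vR (p : ℕ × ℕ) : ℝ :=
  if 1 ≤ p.2 ∧ p.2 ≤ p.1 then 1 / ((p.2 : ℝ) * (p.1 : ℝ) ^ 2) else 0

noncomputable def dR (p : ℕ × ℕ) : ℝ :=
  if p.2 = p.1 ∧ 1 ≤ p.2 then 1 / ((p.2 : ℝ) * (p.1 : ℝ) ^ 2) else 0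

lemma inner_tele (m : ℕ) (hm : 1 ≤ m) :
    ∑' n : ℕ, ENNReal.ofReal (tR (m, n)) = ENNReal.ofReal (Hh m / (m : ℝ) ^ 2) := by
  have hfun : (fun n : ℕ => tR (m, n))
      = fun n : ℕ => if 1 ≤ n then 1 / ((m : ℝ) * n * ((n : ℝ) + m)) else 0 := by
    funext n
    simp only [tR]
    by_cases hn : 1 ≤ n
    · rw [if_pos ⟨hm, hn⟩, if_pos hn]
      ring_nf
    · rw [if_neg (by tauto), if_neg hn]
  have hs := hasSum_tele m hm
  have hnn : ∀ n : ℕ, 0 ≤ if 1 ≤ n then 1 / ((m : ℝ) * n * ((n : ℝ) + m)) else 0 :=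
    fun n => by split <;> positivity
  calc ∑' n : ℕ, ENNReal.ofReal (tR (m, n))
      = ∑' n : ℕ, ENNReal.ofReal (if 1 ≤ n then 1 / ((m : ℝ) * n * ((n : ℝ) + m)) else 0) :=
        tsum_congr fun n => by rw [congrFun hfun n]
    _ = ENNReal.ofReal (∑' n : ℕ, if 1 ≤ n then 1 / ((m : ℝ) * n * ((n : ℝ) + m)) else 0) :=
        (ENNReal.ofReal_tsum_of_nonneg hnn hs.summable).symm
    _ = ENNReal.ofReal (Hh m / (m : ℝ) ^ 2) := by rw [hs.tsum_eq]

lemma inner_finite (m : ℕ) (hm : 1 ≤ m) :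
    ENNReal.ofReal (Hh m / (m : ℝ) ^ 2) = ∑' y : ℕ, ENNReal.ofReal (vR (m, y)) := by
  have hm' : (0:ℝ) < m := by exact_mod_cast hm
  have h1 : Hh m / (m : ℝ) ^ 2 = ∑ k ∈ Finset.range m, 1 / (((k : ℝ) + 1) * (m : ℝ) ^ 2) := by
    rw [Hh, Finset.sum_div]
    apply Finset.sum_congr rfl
    intro k _
    rw [div_div]
  rw [h1, ENNReal.ofReal_sum_of_nonneg (fun k _ => by positivity)]
  rw [tsum_eq_sum (s := Finset.range (m + 1))
    (by
      intro b hb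
      simp only [Finset.mem_range] at hb
      have : ¬(1 ≤ b ∧ b ≤ m) := by omega
      simp [vR, this])]
  rw [Finset.sum_range_succ']
  have h0 : ENNReal.ofReal (vR (m, 0)) = 0 := by
    simp [vR]
  rw [h0, add_zero]
  apply Finset.sum_congr rfl
  intro k hk
  simp only [Finset.mem_range] at hk
  simp only [vR]
  rw [if_pos ⟨by omega, by omega⟩]
  congr 1
  push_cast
  ring_nf

lemma TS_eq_SA_SZ : TS = SA + SZ := by
  have step1 : TS = ∑' p : ℕ × ℕ, ENNReal.ofReal (vR p) := by
    rw [TS, ENNReal.tsum_prod', ENNReal.tsum_prod']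
    apply tsum_congr
    intro m
    by_cases hm : 1 ≤ m
    · rw [show (fun n => ENNReal.ofReal (tR (m, n))) = fun n => ENNReal.ofReal (tR (m, n)) from rfl]
      rw [inner_tele m hm, inner_finite m hm]
    · have h1 : ∀ n : ℕ, tR (m, n) = 0 := by
        intro n; simp only [tR]; rw [if_neg (by tauto)]
      have h2 : ∀ y : ℕ, vR (m, y) = 0 := by
        intro y; simp only [vR]; rw [if_neg (by omega)]
      simp [h1, h2]
  have step2 : ∀ p : ℕ × ℕ,
      ENNReal.ofReal (vR p) = ENNReal.ofReal (aR p) + ENNReal.ofReal (dR p) := by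
    rintro ⟨m, y⟩
    by_cases h1 : y < m ∧ 1 ≤ y
    · have hv : vR (m, y) = aR (m, y) := by
        simp only [vR, aR]
        rw [if_pos ⟨h1.2, h1.1.le⟩, if_pos h1]
      have hd : dR (m, y) = 0 := by
        simp only [dR]; rw [if_neg (by omega)]
      rw [hv, hd, ENNReal.ofReal_zero, add_zero]
    · by_cases h2 : y = m ∧ 1 ≤ y
      · have hv : vR (m, y) = dR (m, y) := by
          simp only [vR, dR]
          rw [if_pos ⟨h2.2, by omega⟩, if_pos h2]
        have ha : aR (m, y) = 0 := by
          simp only [aR]; rw [if_neg (by omega)]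
        rw [hv, ha, ENNReal.ofReal_zero, zero_add]
      · have hv : vR (m, y) = 0 := by
          simp only [vR]; rw [if_neg (by omega)]
        have ha : aR (m, y) = 0 := by
          simp only [aR]; rw [if_neg (by omega)]
        have hd : dR (m, y) = 0 := by
          simp only [dR]; rw [if_neg (by omega)]
        rw [hv, ha, hd, ENNReal.ofReal_zero, add_zero]
  have step3 : ∑' p : ℕ × ℕ, ENNReal.ofReal (dR p) = SZ := by
    rw [ENNReal.tsum_prod', SZ]
    apply tsum_congr
    intro m
    rw [tsum_eq_single m (by
      intro y hy
      simp only [dR]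
      rw [if_neg (by tauto)]
      simp)]
    by_cases hm : 1 ≤ m
    · rw [show dR (m, m) = 1 / ((m:ℝ) * (m:ℝ) ^ 2) from by simp [dR, hm],
        show zR m = 1 / (m:ℝ) ^ 3 from by simp [zR, hm]]
      congr 1
      ring
    · rw [show dR (m, m) = 0 from by simp [dR]; omega,
        show zR m = 0 from by simp [zR]; omega]
  rw [step1, SA]
  rw [show (∑' p : ℕ × ℕ, ENNReal.ofReal (vR p))
      = ∑' p : ℕ × ℕ, (ENNReal.ofReal (aR p) + ENNReal.ofReal (dR p)) from tsum_congr step2]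
  rw [ENNReal.tsum_add, step3]

noncomputable def hR (n : ℕ) : ℝ := ((n : ℝ) ^ ((3:ℝ)/2))⁻¹

lemma hR_nonneg (n : ℕ) : 0 ≤ hR n := by unfold hR; positivity

lemma hR_summable : Summable hR := Real.summable_nat_rpow_inv.mpr (by norm_num)

lemma aR_le (p : ℕ × ℕ) : aR p ≤ hR p.1 * hR p.2 := by
  obtain ⟨x, y⟩ := p
  simp only [aR]
  split
  · rename_i hc
    obtain ⟨hyx, hy⟩ := hc
    have hy' : (0:ℝ) < y := by exact_mod_cast hy
    have hx0 : 0 < x := by omega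
    have hx' : (0:ℝ) < x := by exact_mod_cast hx0
    have hyx' : (y:ℝ) ≤ x := by exact_mod_cast hyx.le
    simp only [hR]
    rw [← mul_inv]
    rw [one_div]
    apply inv_anti₀
    · positivity
    · have e1 : (x:ℝ) ^ ((3:ℝ)/2) = x * (x:ℝ) ^ ((1:ℝ)/2) := by
        rw [show ((3:ℝ)/2) = 1 + (1:ℝ)/2 by norm_num, Real.rpow_add hx', Real.rpow_one]
      have e2 : (y:ℝ) ^ ((3:ℝ)/2) = y * (y:ℝ) ^ ((1:ℝ)/2) := by
        rw [show ((3:ℝ)/2) = 1 + (1:ℝ)/2 by norm_num, Real.rpow_add hy', Real.rpow_one]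
      rw [e1, e2]
      have h12 : (y:ℝ) ^ ((1:ℝ)/2) ≤ (x:ℝ) ^ ((1:ℝ)/2) :=
        Real.rpow_le_rpow hy'.le hyx' (by norm_num)
      have hxx : (x:ℝ) ^ ((1:ℝ)/2) * (x:ℝ) ^ ((1:ℝ)/2) = x := by
        rw [← Real.rpow_add hx']
        norm_num
      calc (x:ℝ) * (x:ℝ) ^ ((1:ℝ)/2) * ((y:ℝ) * (y:ℝ) ^ ((1:ℝ)/2))
          ≤ (x:ℝ) * (x:ℝ) ^ ((1:ℝ)/2) * ((y:ℝ) * (x:ℝ) ^ ((1:ℝ)/2)) := by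
            apply mul_le_mul_of_nonneg_left
            · exact mul_le_mul_of_nonneg_left h12 hy'.le
            · positivity
        _ = (y:ℝ) * ((x:ℝ) * ((x:ℝ) ^ ((1:ℝ)/2) * (x:ℝ) ^ ((1:ℝ)/2))) := by ring
        _ = (y:ℝ) * ((x:ℝ) * x) := by rw [hxx]
        _ = (y:ℝ) * (x:ℝ) ^ 2 := by ring
  · exact mul_nonneg (hR_nonneg _) (hR_nonneg _)

lemma SA_ne_top : SA ≠ ∞ := by
  have hle : SA ≤ (∑' n, ENNReal.ofReal (hR n)) * ∑' n, ENNReal.ofReal (hR n) := by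
    rw [SA]
    calc ∑' p : ℕ × ℕ, ENNReal.ofReal (aR p)
        ≤ ∑' p : ℕ × ℕ, ENNReal.ofReal (hR p.1 * hR p.2) :=
          ENNReal.tsum_le_tsum fun p => ENNReal.ofReal_le_ofReal (aR_le p)
      _ = ∑' p : ℕ × ℕ, ENNReal.ofReal (hR p.1) * ENNReal.ofReal (hR p.2) :=
          tsum_congr fun p => ENNReal.ofReal_mul (hR_nonneg p.1)
      _ = ∑' (a : ℕ), ∑' (b : ℕ), ENNReal.ofReal (hR a) * ENNReal.ofReal (hR b) :=
          ENNReal.tsum_prod'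
      _ = ∑' (a : ℕ), ENNReal.ofReal (hR a) * ∑' n, ENNReal.ofReal (hR n) :=
          tsum_congr fun a => ENNReal.tsum_mul_left
      _ = (∑' n, ENNReal.ofReal (hR n)) * ∑' n, ENNReal.ofReal (hR n) :=
          ENNReal.tsum_mul_right
  have hfin : (∑' n, ENNReal.ofReal (hR n)) ≠ ∞ := by
    rw [← ENNReal.ofReal_tsum_of_nonneg hR_nonneg hR_summable]
    exact ENNReal.ofReal_ne_top
  exact ne_top_of_le_ne_top (ENNReal.mul_ne_top hfin hfin) hle

lemma SA_eq_SZ : SA = SZ := by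
  have h := TS_eq_two_SA.symm.trans TS_eq_SA_SZ
  exact (ENNReal.add_right_inj SA_ne_top).mp h

lemma key_eq : 2 * SZ * SC + SB = SZ := by
  rw [mul_assoc, ← SG_eq, split_eq, SA_eq_SZ]

theorem stmt_3 :
    constC = 1 / 2 - (1 / (2 * zetaThree)) *
      ∑' p : ℕ × ℕ,
        if p.2 < p.1 ∧ 1 ≤ p.2 then
          1 / ((p.2 : ℝ) * ((p.1 : ℝ) + p.2) ^ 2)
        else 0 := by
  have hC : constC = SC.toReal := by
    rw [constC, show (fun p : ℕ × ℕ =>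
      if p.2 < p.1 ∧ 1 ≤ p.2 ∧ Nat.gcd p.1 p.2 = 1 then
        (2 * (p.1 : ℝ) + p.2) / (2 * (p.1 : ℝ) ^ 2 * ((p.1 : ℝ) + p.2) ^ 2)
      else 0) = cR from rfl]
    exact tsum_eq_toReal cR cR_nonneg
  have hZ : zetaThree = SZ.toReal := by
    rw [zetaThree, show (fun m : ℕ => if 1 ≤ m then 1 / (m : ℝ) ^ 3 else 0) = zR from rfl]
    exact tsum_eq_toReal zR zR_nonneg
  have hB : (∑' p : ℕ × ℕ,
      if p.2 < p.1 ∧ 1 ≤ p.2 then 1 / ((p.2 : ℝ) * ((p.1 : ℝ) + p.2) ^ 2) else 0)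
      = SB.toReal := by
    rw [show (fun p : ℕ × ℕ =>
      if p.2 < p.1 ∧ 1 ≤ p.2 then 1 / ((p.2 : ℝ) * ((p.1 : ℝ) + p.2) ^ 2) else 0) = bR
      from rfl]
    exact tsum_eq_toReal bR bR_nonneg
  have hSB_ne : SB ≠ ∞ := by
    have : SB ≤ SZ := le_add_self.trans_eq key_eq
    exact ne_top_of_le_ne_top SZ_ne_top this
  have hSCm_ne : 2 * SZ * SC ≠ ∞ := by
    have : 2 * SZ * SC ≤ SZ := le_self_add.trans_eq key_eq
    exact ne_top_of_le_ne_top SZ_ne_top this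
  have hreal : 2 * SZ.toReal * SC.toReal + SB.toReal = SZ.toReal := by
    have h := congrArg ENNReal.toReal key_eq
    rw [ENNReal.toReal_add hSCm_ne hSB_ne, ENNReal.toReal_mul, ENNReal.toReal_mul] at h
    simpa using h
  have hZpos : 0 < zetaThree := by
    rw [hZ]
    exact ENNReal.toReal_pos SZ_ne_zero SZ_ne_top
  rw [hC, hB, hZ] at *
  have hZne : SZ.toReal ≠ 0 := ne_of_gt hZpos
  field_simp
  linarith
end

section
/- Define G₁(n) = Σ_{d | n} Σ_{x > y ≥ 1, gcd(x,y)=1, Y(n,d,x,y) > 1} (1/x)·( A(n,d,x)·Y(n,d,x,y) + B(x,y)·Y(n,d,x,y)²/2 ). Then for every ε > 0 there is a constant K(ε) > 0 such that | G₁(n) − C·n²·Σ_{d | n} 1/d² | ≤ K(ε)·n^{3/2+ε} for all positive integers n. -/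
set_option maxHeartbeats 1000000

open Finset

/-- `Y(n,d,x,y) = min( n/(d(x+y)) , (n - d²x²)/(dy) )`. -/
noncomputable def Ybound (n d x y : ℕ) : ℝ :=
  min ((n : ℝ) / ((d : ℝ) * ((x : ℝ) + y)))
      (((n : ℝ) - (d : ℝ) ^ 2 * (x : ℝ) ^ 2) / ((d : ℝ) * y))

/-- `A(n,d,x) = n/(dx) + dx`. -/
noncomputable def Aterm (n d x : ℕ) : ℝ := (n : ℝ) / ((d : ℝ) * x) + (d : ℝ) * x

/-- `B(x,y) = -y/x`. -/
noncomputable def Bterm (x y : ℕ) : ℝ := -((y : ℝ) / x)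

/-- `G₁(n)`. -/
noncomputable def Gone (n : ℕ) : ℝ :=
  ∑ d ∈ n.divisors,
    ∑' p : ℕ × ℕ,
      if p.2 < p.1 ∧ 1 ≤ p.2 ∧ Nat.gcd p.1 p.2 = 1 ∧ 1 < Ybound n d p.1 p.2 then
        (1 / (p.1 : ℝ)) *
          (Aterm n d p.1 * Ybound n d p.1 p.2 + Bterm p.1 p.2 * (Ybound n d p.1 p.2) ^ 2 / 2)
      else 0



lemma tail_sq (t : Finset ℕ) (r : ℝ) (hr : 0 < r) (ht : ∀ x ∈ t, 1 ≤ x ∧ r ≤ (x:ℝ)) :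
    ∑ x ∈ t, 1/(x:ℝ)^2 ≤ 2/r := by
  rcases t.eq_empty_or_nonempty with h | h
  · simp [h]; positivity
  · set m := t.min' h with hmdef
    set M := t.max' h with hMdef
    have hm : m ∈ t := t.min'_mem h
    have hm1 : 1 ≤ m := (ht m hm).1
    have hmr : r ≤ (m:ℝ) := (ht m hm).2
    have hmM : m ≤ M := t.min'_le M (t.max'_mem h)
    set g : ℕ → ℝ := fun x => 1/(2*(x:ℝ)-1) with hg
    have hgmono : ∀ x : ℕ, 1 ≤ x → 0 ≤ g x - g (x+1) := by
      intro x hx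
      have hx1 : (1:ℝ) ≤ (x:ℝ) := by exact_mod_cast hx
      have h1 : (0:ℝ) < 2*(x:ℝ)-1 := by linarith
      have h2 : (0:ℝ) < 2*((x:ℝ)+1)-1 := by linarith
      have : g (x+1) ≤ g x := by
        simp only [hg]
        push_cast
        apply one_div_le_one_div_of_le h1
        linarith
      linarith
    have key : ∀ x ∈ t, 1/(x:ℝ)^2 ≤ 2*(g x - g (x+1)) := by
      intro x hx
      have hx1 : (1:ℝ) ≤ (x:ℝ) := by exact_mod_cast (ht x hx).1
      have h1 : (0:ℝ) < 2*(x:ℝ)-1 := by linarith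
      have h2 : (0:ℝ) < 2*((x:ℝ)+1)-1 := by linarith
      have hxpos : (0:ℝ) < (x:ℝ)^2 := by positivity
      simp only [hg]
      push_cast
      have e : 2*(1/(2*(x:ℝ)-1) - 1/(2*((x:ℝ)+1)-1)) = 4/((2*(x:ℝ)-1)*(2*(x:ℝ)+1)) := by
        field_simp
        ring
      have hpos : (0:ℝ) < (2*(x:ℝ)-1)*(2*(x:ℝ)+1) := by
        have h1 : (0:ℝ) < 2*(x:ℝ)-1 := by linarith
        have h2 : (0:ℝ) < 2*(x:ℝ)+1 := by linarith
        exact mul_pos h1 h2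
      rw [e, div_le_div_iff₀ hxpos hpos]
      have e2 : 4*(x:ℝ)^2 - 1*((2*(x:ℝ)-1)*(2*(x:ℝ)+1)) = 1 := by ring
      linarith
    calc ∑ x ∈ t, 1/(x:ℝ)^2 ≤ ∑ x ∈ t, 2*(g x - g (x+1)) := Finset.sum_le_sum key
      _ ≤ ∑ x ∈ Finset.Icc m M, 2*(g x - g (x+1)) := by
          apply Finset.sum_le_sum_of_subset_of_nonneg
          · intro x hx
            simp only [Finset.mem_Icc]
            exact ⟨t.min'_le x hx, t.le_max' x hx⟩
          · intro x hx _
            simp only [Finset.mem_Icc] at hx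
            have := hgmono x (le_trans hm1 hx.1)
            linarith
      _ = 2 * ∑ x ∈ Finset.Icc m M, (g x - g (x+1)) := by rw [Finset.mul_sum]
      _ = 2 * (g m - g (M+1)) := by
          congr 1
          rw [show Finset.Icc m M = Finset.Ico m (M+1) from (Finset.Ico_add_one_right_eq_Icc m M).symm,
            Finset.sum_Ico_eq_sum_range]
          calc ∑ k ∈ range (M+1-m), (g (m+k) - g (m+k+1))
              = ∑ k ∈ range (M+1-m), ((fun i => g (m+i)) k - (fun i => g (m+i)) (k+1)) := by
                apply Finset.sum_congr rfl; intro k _; simp [Nat.add_assoc]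
            _ = g (m+0) - g (m+(M+1-m)) := Finset.sum_range_sub' _ _
            _ = g m - g (M+1) := by rw [Nat.add_zero, Nat.add_sub_cancel' (by omega : m ≤ M+1)]
      _ ≤ 2/r := by
          have hM1 : (0:ℝ) ≤ g (M+1) := by
            simp only [hg]
            have : (1:ℝ) ≤ (M:ℝ) := by exact_mod_cast le_trans hm1 hmM
            push_cast
            exact div_nonneg zero_le_one (by linarith)
          have hgm : g m ≤ 1/r := by
            simp only [hg]
            apply one_div_le_one_div_of_le hr
            have : (1:ℝ) ≤ (m:ℝ) := by exact_mod_cast hm1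
            linarith
          calc 2*(g m - g (M+1)) ≤ 2*(1/r) := by linarith
            _ = 2/r := by ring


lemma sum_bound_tail (g : ℕ × ℕ → ℝ) (c r : ℝ) (hc : 0 ≤ c) (hr : 0 < r)
    (hsupp : ∀ p : ℕ×ℕ, g p ≠ 0 → 1 ≤ p.2 ∧ p.2 < p.1 ∧ r ≤ (p.1:ℝ) ∧ g p ≤ c/(p.1:ℝ)^3)
    (s : Finset (ℕ×ℕ)) : ∑ p ∈ s, g p ≤ 2*c/r := by
  set h : ℕ×ℕ → ℝ := fun p => if 1 ≤ p.2 ∧ p.2 < p.1 ∧ r ≤ (p.1:ℝ) then c/(p.1:ℝ)^3 else 0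
    with hh
  have hh0 : ∀ p : ℕ×ℕ, 0 ≤ h p := by
    intro p; simp only [hh]
    split
    · positivity
    · exact le_refl 0
  have hgh : ∀ p, g p ≤ h p := by
    intro p
    by_cases hp : g p = 0
    · rw [hp]; exact hh0 p
    · obtain ⟨h1, h2, h3, h4⟩ := hsupp p hp
      simp only [hh]
      split
      · exact h4
      · next hcon => exact absurd ⟨h1, h2, h3⟩ hcon
  set t := s.image Prod.fst with hts
  set u := s.image Prod.snd with hus
  have hsub : s ⊆ t ×ˢ u := by
    intro p hp
    simp only [hts, hus, Finset.mem_product, Finset.mem_image]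
    exact ⟨⟨p, hp, rfl⟩, ⟨p, hp, rfl⟩⟩
  have step1 : ∑ p ∈ s, g p ≤ ∑ p ∈ t ×ˢ u, h p := by
    calc ∑ p ∈ s, g p ≤ ∑ p ∈ s, h p := Finset.sum_le_sum fun p _ => hgh p
      _ ≤ ∑ p ∈ t ×ˢ u, h p := Finset.sum_le_sum_of_subset_of_nonneg hsub
          (fun p _ _ => hh0 p)
  have step2 : ∑ p ∈ t ×ˢ u, h p ≤ ∑ x ∈ t, (if 1 ≤ x ∧ r ≤ (x:ℝ) then c/(x:ℝ)^2 else 0) := by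
    rw [Finset.sum_product]
    apply Finset.sum_le_sum
    intro x _
    by_cases hx : 1 ≤ x ∧ r ≤ (x:ℝ)
    · rw [if_pos hx]
      have hx1 : (1:ℝ) ≤ (x:ℝ) := by exact_mod_cast hx.1
      calc ∑ y ∈ u, h (x, y)
          ≤ ∑ y ∈ u.filter (fun y => 1 ≤ y ∧ y < x), c/(x:ℝ)^3 := by
            rw [Finset.sum_filter]
            apply Finset.sum_le_sum
            intro y _
            simp only [hh]
            split_ifs with hA hB
            · exact le_refl _
            · exact absurd ⟨hA.1, hA.2.1⟩ hB
            · positivity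
            · exact le_refl _
        _ = (u.filter (fun y => 1 ≤ y ∧ y < x)).card * (c/(x:ℝ)^3) := by
            rw [Finset.sum_const, nsmul_eq_mul]
        _ ≤ (x:ℝ) * (c/(x:ℝ)^3) := by
            apply mul_le_mul_of_nonneg_right _ (by positivity)
            have hcard : (u.filter (fun y => 1 ≤ y ∧ y < x)).card ≤ x := by
              calc (u.filter (fun y => 1 ≤ y ∧ y < x)).card
                  ≤ (Finset.Ico 1 x).card := Finset.card_le_card (by
                    intro y hy
                    simp only [Finset.mem_filter] at hy
                    simp only [Finset.mem_Ico]
                    exact hy.2)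
                _ = x - 1 := by rw [Nat.card_Ico]
                _ ≤ x := Nat.sub_le x 1
            exact_mod_cast hcard
        _ = c/(x:ℝ)^2 := by
            field_simp
    · rw [if_neg hx]
      have hz : ∀ y ∈ u, h (x,y) = 0 := by
        intro y _
        simp only [hh]
        rw [if_neg]
        rintro ⟨hy1, hyx, hrx⟩
        exact hx ⟨by omega, hrx⟩
      rw [Finset.sum_eq_zero hz]
  have step3 : ∑ x ∈ t, (if 1 ≤ x ∧ r ≤ (x:ℝ) then c/(x:ℝ)^2 else 0) ≤ 2*c/r := by
    rw [← Finset.sum_filter]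
    calc ∑ x ∈ t.filter (fun x : ℕ => 1 ≤ x ∧ r ≤ (x:ℝ)), c/(x:ℝ)^2
        = c * ∑ x ∈ t.filter (fun x : ℕ => 1 ≤ x ∧ r ≤ (x:ℝ)), 1/(x:ℝ)^2 := by
          rw [Finset.mul_sum]
          apply Finset.sum_congr rfl
          intro x _
          rw [mul_one_div]
      _ ≤ c * (2/r) := by
          apply mul_le_mul_of_nonneg_left _ hc
          apply tail_sq _ r hr
          intro x hx
          simp only [Finset.mem_filter] at hx
          exact hx.2
      _ = 2*c/r := by ring
  exact le_trans step1 (le_trans step2 step3)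


lemma sum_bound_box (g : ℕ × ℕ → ℝ) (c R : ℝ) (hc : 0 ≤ c) (hR : 0 ≤ R)
    (hsupp : ∀ p : ℕ×ℕ, g p ≠ 0 → 1 ≤ p.2 ∧ p.2 < p.1 ∧ (p.1:ℝ) ≤ R ∧ g p ≤ c/(p.1:ℝ))
    (s : Finset (ℕ×ℕ)) : ∑ p ∈ s, g p ≤ c*R := by
  set h : ℕ×ℕ → ℝ := fun p => if 1 ≤ p.2 ∧ p.2 < p.1 ∧ (p.1:ℝ) ≤ R then c/(p.1:ℝ) else 0
    with hh
  have hh0 : ∀ p : ℕ×ℕ, 0 ≤ h p := by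
    intro p; simp only [hh]
    split
    · positivity
    · exact le_refl 0
  have hgh : ∀ p, g p ≤ h p := by
    intro p
    by_cases hp : g p = 0
    · rw [hp]; exact hh0 p
    · obtain ⟨h1, h2, h3, h4⟩ := hsupp p hp
      simp only [hh]
      split
      · exact h4
      · next hcon => exact absurd ⟨h1, h2, h3⟩ hcon
  set t := s.image Prod.fst with hts
  set u := s.image Prod.snd with hus
  have hsub : s ⊆ t ×ˢ u := by
    intro p hp
    simp only [hts, hus, Finset.mem_product, Finset.mem_image]
    exact ⟨⟨p, hp, rfl⟩, ⟨p, hp, rfl⟩⟩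
  have step1 : ∑ p ∈ s, g p ≤ ∑ p ∈ t ×ˢ u, h p := by
    calc ∑ p ∈ s, g p ≤ ∑ p ∈ s, h p := Finset.sum_le_sum fun p _ => hgh p
      _ ≤ ∑ p ∈ t ×ˢ u, h p := Finset.sum_le_sum_of_subset_of_nonneg hsub
          (fun p _ _ => hh0 p)
  have step2 : ∑ p ∈ t ×ˢ u, h p ≤ ∑ x ∈ t, (if 1 ≤ x ∧ (x:ℝ) ≤ R then c else 0) := by
    rw [Finset.sum_product]
    apply Finset.sum_le_sum
    intro x _
    by_cases hx : 1 ≤ x ∧ (x:ℝ) ≤ R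
    · rw [if_pos hx]
      have hx1 : (1:ℝ) ≤ (x:ℝ) := by exact_mod_cast hx.1
      calc ∑ y ∈ u, h (x, y)
          ≤ ∑ y ∈ u.filter (fun y => 1 ≤ y ∧ y < x), c/(x:ℝ) := by
            rw [Finset.sum_filter]
            apply Finset.sum_le_sum
            intro y _
            simp only [hh]
            split_ifs with hA hB
            · exact le_refl _
            · exact absurd ⟨hA.1, hA.2.1⟩ hB
            · positivity
            · exact le_refl _
        _ = (u.filter (fun y => 1 ≤ y ∧ y < x)).card * (c/(x:ℝ)) := by
            rw [Finset.sum_const, nsmul_eq_mul]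
        _ ≤ (x:ℝ) * (c/(x:ℝ)) := by
            apply mul_le_mul_of_nonneg_right _ (by positivity)
            have hcard : (u.filter (fun y => 1 ≤ y ∧ y < x)).card ≤ x := by
              calc (u.filter (fun y => 1 ≤ y ∧ y < x)).card
                  ≤ (Finset.Ico 1 x).card := Finset.card_le_card (by
                    intro y hy
                    simp only [Finset.mem_filter] at hy
                    simp only [Finset.mem_Ico]
                    exact hy.2)
                _ = x - 1 := by rw [Nat.card_Ico]
                _ ≤ x := Nat.sub_le x 1
            exact_mod_cast hcard
        _ = c := by field_simp
    · rw [if_neg hx]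
      have hz : ∀ y ∈ u, h (x,y) = 0 := by
        intro y _
        simp only [hh]
        rw [if_neg]
        rintro ⟨hy1, hyx, hrx⟩
        exact hx ⟨by omega, hrx⟩
      rw [Finset.sum_eq_zero hz]
  have step3 : ∑ x ∈ t, (if 1 ≤ x ∧ (x:ℝ) ≤ R then c else 0) ≤ c*R := by
    rw [← Finset.sum_filter]
    rw [Finset.sum_const, nsmul_eq_mul]
    have hcard : ((t.filter (fun x : ℕ => 1 ≤ x ∧ (x:ℝ) ≤ R)).card : ℝ) ≤ R := by
      have hsub2 : t.filter (fun x : ℕ => 1 ≤ x ∧ (x:ℝ) ≤ R) ⊆ Finset.Icc 1 ⌊R⌋₊ := by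
        intro x hx
        simp only [Finset.mem_filter] at hx
        simp only [Finset.mem_Icc]
        exact ⟨hx.2.1, Nat.le_floor hx.2.2⟩
      calc ((t.filter (fun x : ℕ => 1 ≤ x ∧ (x:ℝ) ≤ R)).card : ℝ)
          ≤ ((Finset.Icc 1 ⌊R⌋₊).card : ℝ) := by exact_mod_cast Finset.card_le_card hsub2
        _ = (⌊R⌋₊ : ℝ) := by rw [Nat.card_Icc]; simp
        _ ≤ R := Nat.floor_le hR
    calc ((t.filter (fun x : ℕ => 1 ≤ x ∧ (x:ℝ) ≤ R)).card : ℝ) * c ≤ R * c :=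
          mul_le_mul_of_nonneg_right hcard hc
      _ = c * R := by ring
  exact le_trans step1 (le_trans step2 step3)

lemma pointwise (n d x y : ℕ) (hd : 0 < d) (hn : 0 < n) (hy : 1 ≤ y) (hxy : y < x) :
    |(if 1 < Ybound n d x y then
        (1/(x:ℝ)) * (Aterm n d x * Ybound n d x y + Bterm x y * (Ybound n d x y)^2/2)
      else 0)
      - ((n:ℝ)/d)^2 * ((2*(x:ℝ)+y)/(2*(x:ℝ)^2*((x:ℝ)+y)^2))|
    ≤ (if (d:ℝ)*(x:ℝ)^2 < (n:ℝ)/d then (d:ℝ)*(((n:ℝ)/d)/(x:ℝ)) else 0)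
      + (if (n:ℝ)/d ≤ 2*((d:ℝ)*(x:ℝ)^2) then (7/2)*(((n:ℝ)/d)^2/(x:ℝ)^3) else 0)
      + (if (n:ℝ)/d ≤ 2*(x:ℝ) then (3/2)*(((n:ℝ)/d)^2/(x:ℝ)^3) else 0) := by
  set X : ℝ := (x:ℝ) with hX
  set Yc : ℝ := (y:ℝ) with hYc
  set D : ℝ := (d:ℝ) with hD
  set N : ℝ := (n:ℝ)/D with hN
  have hD1 : 1 ≤ D := by rw [hD]; exact_mod_cast hd
  have hD0 : 0 < D := lt_of_lt_of_le one_pos hD1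
  have hy1 : 1 ≤ Yc := by rw [hYc]; exact_mod_cast hy
  have hyX : Yc < X := by rw [hYc, hX]; exact_mod_cast hxy
  have hX2 : (2:ℝ) ≤ X := by
    have h2 : 2 ≤ x := by omega
    rw [hX]; exact_mod_cast h2
  have hYc0 : (0:ℝ) < Yc := by linarith
  have hX0 : 0 < X := by linarith
  have hXY0 : 0 < X + Yc := by linarith
  have hN0 : 0 < N := by
    apply div_pos _ hD0
    exact_mod_cast hn
  have hYb : Ybound n d x y = min (N/(X+Yc)) ((N - D*X^2)/Yc) := by
    unfold Ybound
    rw [← hX, ← hYc, ← hD]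
    congr 1
    · rw [hN, div_div]
    · rw [hN]
      field_simp
  set m1 : ℝ := N/(X+Yc) with hm1
  set m2 : ℝ := (N - D*X^2)/Yc with hm2
  have hm1pos : 0 < m1 := div_pos hN0 hXY0
  have hFle : (2*X+Yc)/(2*X^2*(X+Yc)^2) ≤ (3/2)/X^3 := by
    rw [div_le_div_iff₀ (by positivity) (by positivity)]
    have e : 3/2*(2*X^2*(X+Yc)^2) - (2*X+Yc)*X^3 = X^4 + 5*(X^3*Yc) + 3*(X^2*Yc^2) := by
      ring
    have nn : (0:ℝ) ≤ X^4 + 5*(X^3*Yc) + 3*(X^2*Yc^2) := by positivity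
    linarith
  have hF0 : 0 ≤ (2*X+Yc)/(2*X^2*(X+Yc)^2) := by positivity
  have hNF : N^2 * ((2*X+Yc)/(2*X^2*(X+Yc)^2)) ≤ (3/2)*(N^2/X^3) := by
    calc N^2 * ((2*X+Yc)/(2*X^2*(X+Yc)^2)) ≤ N^2 * ((3/2)/X^3) :=
          mul_le_mul_of_nonneg_left hFle (by positivity)
      _ = (3/2)*(N^2/X^3) := by ring
  have hE1nn : 0 ≤ (if D*X^2 < N then D*(N/X) else 0) := by
    split
    · positivity
    · exact le_refl 0
  have hE2nn : 0 ≤ (if N ≤ 2*(D*X^2) then (7/2)*(N^2/X^3) else 0) := by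
    split
    · positivity
    · exact le_refl 0
  have hE3nn : 0 ≤ (if N ≤ 2*X then (3/2)*(N^2/X^3) else 0) := by
    split
    · positivity
    · exact le_refl 0
  by_cases hY : 1 < Ybound n d x y
  · -- main case
    rw [if_pos hY]
    rw [hYb] at hY
    have h1m1 : 1 < m1 := lt_of_lt_of_le hY (min_le_left _ _)
    have h1m2 : 1 < m2 := lt_of_lt_of_le hY (min_le_right _ _)
    have hdx2 : D*X^2 < N := by
      have h2 : Yc < N - D*X^2 := (one_lt_div hYc0).mp h1m2
      linarith
    rw [if_pos hdx2, hYb]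
    have hA : Aterm n d x = N/X + D*X := by
      unfold Aterm
      rw [← hX, ← hD, hN, div_div]
    have hB : Bterm x y = -(Yc/X) := by
      unfold Bterm
      rw [← hX, ← hYc]
    rw [hA, hB]
    set Yv : ℝ := min m1 m2 with hYvdef
    have hYv1 : 1 < Yv := hY
    have hYv0 : 0 < Yv := by linarith
    have hYvle : Yv ≤ m1 := min_le_left _ _
    have hm1NX : m1 ≤ N/X := by
      rw [hm1]
      exact div_le_div_of_nonneg_left hN0.le hX0 (by linarith)
    have key : (1/X)*((N/X + D*X)*Yv + (-(Yc/X))*Yv^2/2) - N^2*((2*X+Yc)/(2*X^2*(X+Yc)^2))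
        = D*Yv + (N/X^2)*(Yv - m1) + (Yc/(2*X^2))*(m1^2 - Yv^2) := by
      rw [hm1]
      field_simp
      ring
    rw [key]
    rcases le_or_gt m1 m2 with hcase | hcase
    · -- Yv = m1
      have hYvm1 : Yv = m1 := min_eq_left hcase
      have e : D*Yv + (N/X^2)*(Yv - m1) + (Yc/(2*X^2))*(m1^2 - Yv^2) = D*m1 := by
        rw [hYvm1]; ring
      rw [e, abs_of_nonneg (by positivity)]
      have hb : D*m1 ≤ D*(N/X) := mul_le_mul_of_nonneg_left hm1NX hD0.le
      linarith [hE2nn, hE3nn]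
    · -- Yv = m2 < m1
      have hYvm2 : Yv = m2 := min_eq_right hcase.le
      have hcross : (N - D*X^2)*(X+Yc) < N*Yc := by
        have := (div_lt_div_iff₀ hYc0 hXY0).mp (by rw [← hm1, ← hm2]; exact hcase)
        linarith
      have hNle2 : N ≤ 2*(D*X^2) := by
        have hexp : (N - D*X^2)*(X+Yc) = N*X + N*Yc - D*X^2*X - D*X^2*Yc := by ring
        rw [hexp] at hcross
        have hYcX : D*X^2*Yc ≤ D*X^2*X :=
          mul_le_mul_of_nonneg_left hyX.le (by positivity)
        have e7 : (2*(D*X^2))*X = 2*(D*X^2*X) := by ring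
        have h7 : N*X < (2*(D*X^2))*X := by linarith [e7]
        have h8 := lt_of_mul_lt_mul_right h7 hX0.le
        linarith
      rw [if_pos hNle2]
      have hb1 : D*Yv ≤ D*(N/X) := mul_le_mul_of_nonneg_left (hYvle.trans hm1NX) hD0.le
      have hb1' : 0 ≤ D*Yv := by positivity
      have hNX2 : (0:ℝ) ≤ N/X^2 := by positivity
      have ht2eq : (N/X^2)*(Yv - m1) = -((N/X^2)*(m1 - Yv)) := by ring
      have ht2nn : 0 ≤ (N/X^2)*(m1 - Yv) := mul_nonneg hNX2 (by linarith)
      have ht2ub : (N/X^2)*(m1 - Yv) ≤ N^2/X^3 := by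
        calc (N/X^2)*(m1 - Yv) ≤ (N/X^2)*m1 := mul_le_mul_of_nonneg_left (by linarith) hNX2
          _ ≤ (N/X^2)*(N/X) := mul_le_mul_of_nonneg_left hm1NX hNX2
          _ = N^2/X^3 := by field_simp
      have ht3nn : 0 ≤ (Yc/(2*X^2))*(m1^2 - Yv^2) := by
        apply mul_nonneg (by positivity)
        have hp := mul_nonneg (by linarith : (0:ℝ) ≤ m1 - Yv) (by linarith : (0:ℝ) ≤ m1 + Yv)
        have e : (m1 - Yv)*(m1 + Yv) = m1^2 - Yv^2 := by ring
        linarith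
      have ht3ub : (Yc/(2*X^2))*(m1^2 - Yv^2) ≤ N^2/X^3 := by
        have h1 : m1^2 - Yv^2 ≤ m1^2 := by linarith [sq_nonneg Yv]
        have h2 : (Yc/(2*X^2))*(m1^2 - Yv^2) ≤ (Yc/(2*X^2))*m1^2 :=
          mul_le_mul_of_nonneg_left h1 (by positivity)
        have h3 : (Yc/(2*X^2))*m1^2 ≤ (X/(2*X^2))*(N/X)^2 := by
          apply mul_le_mul
          · exact (div_le_div_iff_of_pos_right (by positivity : (0:ℝ) < 2*X^2)).mpr hyX.le
          · exact pow_le_pow_left₀ hm1pos.le hm1NX 2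
          · positivity
          · positivity
        have h4 : (X/(2*X^2))*(N/X)^2 = N^2/(2*X^3) := by field_simp
        have h5 : N^2/(2*X^3) ≤ N^2/X^3 := by
          have : (0:ℝ) ≤ N^2/X^3 := by positivity
          have e : N^2/(2*X^3) = (1/2)*(N^2/X^3) := by ring
          linarith [e]
        linarith [h2, h3, h4.le, h4.ge, h5]
      have hq : (0:ℝ) ≤ N^2/X^3 := by positivity
      have h1 : |D*Yv| ≤ D*(N/X) := by
        rw [abs_of_nonneg hb1']
        exact hb1
      have h2 : |N/X^2*(Yv - m1)| ≤ N^2/X^3 := by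
        rw [ht2eq, abs_neg, abs_of_nonneg ht2nn]
        exact ht2ub
      have h3 : |Yc/(2*X^2)*(m1^2 - Yv^2)| ≤ N^2/X^3 := by
        rw [abs_of_nonneg ht3nn]
        exact ht3ub
      have habs : |D*Yv + N/X^2*(Yv - m1) + Yc/(2*X^2)*(m1^2 - Yv^2)|
          ≤ D*(N/X) + N^2/X^3 + N^2/X^3 := by
        calc |D*Yv + N/X^2*(Yv - m1) + Yc/(2*X^2)*(m1^2 - Yv^2)|
            ≤ |D*Yv + N/X^2*(Yv - m1)| + |Yc/(2*X^2)*(m1^2 - Yv^2)| := abs_add_le _ _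
          _ ≤ |D*Yv| + |N/X^2*(Yv - m1)| + |Yc/(2*X^2)*(m1^2 - Yv^2)| := by
              have := abs_add_le (D*Yv) (N/X^2*(Yv - m1))
              linarith
          _ ≤ D*(N/X) + N^2/X^3 + N^2/X^3 := by linarith [h1, h2, h3]
      refine le_trans habs ?_
      have hstep : D*(N/X) + N^2/X^3 + N^2/X^3 ≤ D*(N/X) + (7/2)*(N^2/X^3) := by
        linarith [hq]
      exact le_trans hstep (le_add_of_nonneg_right hE3nn)
  · -- Y ≤ 1 case
    rw [if_neg hY]
    rw [hYb] at hY
    push_neg at hY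
    rw [zero_sub, abs_neg, abs_of_nonneg (by positivity)]
    rcases min_le_iff.mp hY with hc1 | hc2
    · -- m1 ≤ 1 : N ≤ X + Yc ≤ 2X
      have hNle : N ≤ X + Yc := by
        rw [hm1, div_le_one hXY0] at hc1
        exact hc1
      have hN2X : N ≤ 2*X := by linarith
      have : (if N ≤ 2*X then (3/2)*(N^2/X^3) else 0) = (3/2)*(N^2/X^3) := if_pos hN2X
      rw [this]
      linarith [hNF, hE1nn, hE2nn]
    · -- m2 ≤ 1 : N ≤ 2DX²
      have hNle : N - D*X^2 ≤ Yc := by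
        rw [hm2, div_le_one (by linarith : (0:ℝ) < Yc)] at hc2
        linarith
      have hN2 : N ≤ 2*(D*X^2) := by
        have h1 : X*1 ≤ X*X := mul_le_mul_of_nonneg_left (by linarith) (by linarith)
        have e1 : X*X = X^2 := by ring
        have h2 : X^2 ≤ D*X^2 := le_mul_of_one_le_left (sq_nonneg X) hD1
        linarith
      have : (if N ≤ 2*(D*X^2) then (7/2)*(N^2/X^3) else 0) = (7/2)*(N^2/X^3) := if_pos hN2
      rw [this]
      have h72 : (3/2)*(N^2/X^3) ≤ (7/2)*(N^2/X^3) := by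
        have : (0:ℝ) ≤ N^2/X^3 := by positivity
        linarith
      linarith [hNF, hE1nn, hE3nn]


lemma log_telescope (n : ℕ) (hn : 0 < n) :
    ∑ k ∈ Finset.Icc 1 n, 1/(k:ℝ) ≤ 1 + Real.log n := by
  have h1 : Finset.Icc 1 n = insert 1 (Finset.Icc 2 n) := by
    ext k
    simp only [Finset.mem_Icc, Finset.mem_insert]
    omega
  rw [h1, Finset.sum_insert (by simp)]
  have h2 : ∑ k ∈ Finset.Icc 2 n, 1/(k:ℝ) ≤ Real.log n := by
    have hle : ∀ k ∈ Finset.Icc 2 n, 1/(k:ℝ) ≤ Real.log k - Real.log (k-1) := by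
      intro k hk
      simp only [Finset.mem_Icc] at hk
      have hk2 : (2:ℝ) ≤ (k:ℝ) := by exact_mod_cast hk.1
      have hk1 : (0:ℝ) < (k:ℝ) - 1 := by linarith
      have hk0 : (0:ℝ) < (k:ℝ) := by linarith
      have := Real.log_le_sub_one_of_pos (show (0:ℝ) < ((k:ℝ)-1)/(k:ℝ) by positivity)
      rw [Real.log_div (by linarith) (by linarith)] at this
      have e : ((k:ℝ)-1)/(k:ℝ) - 1 = -(1/(k:ℝ)) := by field_simp; ring
      rw [e] at this
      linarith
    calc ∑ k ∈ Finset.Icc 2 n, 1/(k:ℝ) ≤ ∑ k ∈ Finset.Icc 2 n, (Real.log k - Real.log (k-1)) :=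
          Finset.sum_le_sum hle
      _ = Real.log n := by
          rcases Nat.lt_or_ge n 2 with h | h
          · have : Finset.Icc 2 n = ∅ := by
              apply Finset.Icc_eq_empty
              omega
            have hn1 : n = 1 := by omega
            subst hn1
            simp
          · have e1 : Finset.Icc 2 n = Finset.Ico 2 (n+1) := by rw [Finset.Ico_add_one_right_eq_Icc]
            rw [e1, Finset.sum_Ico_eq_sum_range]
            set f : ℕ → ℝ := fun k => Real.log (k+1) with hf
            have e2 : ∀ k ∈ Finset.range (n+1-2),
                Real.log (↑(2+k)) - Real.log (↑(2+k)-1) = f (k+1) - f k := by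
              intro k _
              simp only [hf]
              push_cast
              ring_nf
            rw [Finset.sum_congr rfl e2, Finset.sum_range_sub f]
            simp only [hf]
            have e3 : ((n + 1 - 2 : ℕ) : ℝ) = (n : ℝ) - 1 := by
              have e4 : n + 1 - 2 = n - 1 := by omega
              rw [e4]
              push_cast [Nat.cast_sub (by omega : 1 ≤ n)]
              ring
            rw [e3]
            norm_num
  linarith

lemma divisors_inv_sum (n : ℕ) (hn : 0 < n) :
    ∑ d ∈ n.divisors, 1/(d:ℝ) ≤ 1 + Real.log n := by
  refine le_trans ?_ (log_telescope n hn)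
  apply Finset.sum_le_sum_of_subset_of_nonneg
  · intro d hd
    simp only [Finset.mem_Icc]
    exact ⟨Nat.pos_of_mem_divisors hd, Nat.divisor_le hd⟩
  · intro d _ _
    positivity

lemma Fval_le (x y : ℕ) (hy : 1 ≤ y) (hxy : y < x) :
    (2*(x:ℝ)+y) / (2*(x:ℝ)^2*((x:ℝ)+y)^2) ≤ (3/2)/(x:ℝ)^3 := by
  have hy1 : (1:ℝ) ≤ (y:ℝ) := by exact_mod_cast hy
  have hyX : (y:ℝ) < (x:ℝ) := by exact_mod_cast hxy
  have hX0 : (0:ℝ) < (x:ℝ) := by linarith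
  rw [div_le_div_iff₀ (by positivity) (by positivity)]
  have e : 3/2*(2*(x:ℝ)^2*((x:ℝ)+y)^2) - (2*(x:ℝ)+y)*(x:ℝ)^3
      = (x:ℝ)^4 + 5*((x:ℝ)^3*(y:ℝ)) + 3*((x:ℝ)^2*(y:ℝ)^2) := by ring
  have nn : (0:ℝ) ≤ (x:ℝ)^4 + 5*((x:ℝ)^3*(y:ℝ)) + 3*((x:ℝ)^2*(y:ℝ)^2) := by positivity
  linarith


noncomputable def Tfun (n d : ℕ) (p : ℕ × ℕ) : ℝ :=
  if p.2 < p.1 ∧ 1 ≤ p.2 ∧ Nat.gcd p.1 p.2 = 1 ∧ 1 < Ybound n d p.1 p.2 then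
    (1 / (p.1 : ℝ)) *
      (Aterm n d p.1 * Ybound n d p.1 p.2 + Bterm p.1 p.2 * (Ybound n d p.1 p.2) ^ 2 / 2)
  else 0

noncomputable def Ffun (p : ℕ × ℕ) : ℝ :=
  if p.2 < p.1 ∧ 1 ≤ p.2 ∧ Nat.gcd p.1 p.2 = 1 then
    (2 * (p.1 : ℝ) + p.2) / (2 * (p.1 : ℝ) ^ 2 * ((p.1 : ℝ) + p.2) ^ 2)
  else 0

lemma perd (n d : ℕ) (hn : 0 < n) (hd : 0 < d) (hdn : d ∣ n) :
    |(∑' p : ℕ × ℕ, Tfun n d p) - ((n:ℝ)/d)^2 * constC|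
      ≤ 21 * ((n:ℝ) * Real.sqrt n / d) := by
  have hdR : (1:ℝ) ≤ (d:ℝ) := by exact_mod_cast hd
  have hd0R : (0:ℝ) < (d:ℝ) := by linarith
  have hnR : (1:ℝ) ≤ (n:ℝ) := by exact_mod_cast hn
  have hn0R : (0:ℝ) < (n:ℝ) := by linarith
  set N : ℝ := (n:ℝ)/(d:ℝ) with hNdef
  have hN0 : 0 < N := by positivity
  set sq : ℝ := Real.sqrt n with hsqdef
  have hsq0 : 0 < sq := Real.sqrt_pos.mpr hn0R
  have hsq1 : 1 ≤ sq := by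
    rw [hsqdef, show (1:ℝ) = Real.sqrt 1 by rw [Real.sqrt_one]]
    exact Real.sqrt_le_sqrt hnR
  have hsqsq : sq * sq = (n:ℝ) := Real.mul_self_sqrt hn0R.le
  -- error majorant functions
  set E1 : ℕ × ℕ → ℝ := fun p =>
    if p.2 < p.1 ∧ 1 ≤ p.2 ∧ (d:ℝ)*(p.1:ℝ)^2 < N then (d:ℝ)*(N/(p.1:ℝ)) else 0 with hE1def
  set E2 : ℕ × ℕ → ℝ := fun p =>
    if p.2 < p.1 ∧ 1 ≤ p.2 ∧ N ≤ 2*((d:ℝ)*(p.1:ℝ)^2) then (7/2)*(N^2/(p.1:ℝ)^3) else 0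
    with hE2def
  set E3 : ℕ × ℕ → ℝ := fun p =>
    if p.2 < p.1 ∧ 1 ≤ p.2 ∧ N ≤ 2*(p.1:ℝ) then (3/2)*(N^2/(p.1:ℝ)^3) else 0 with hE3def
  have hE1nn : ∀ p, 0 ≤ E1 p := by
    intro p; simp only [hE1def]; split
    · positivity
    · exact le_refl 0
  have hE2nn : ∀ p, 0 ≤ E2 p := by
    intro p; simp only [hE2def]; split
    · positivity
    · exact le_refl 0
  have hE3nn : ∀ p, 0 ≤ E3 p := by
    intro p; simp only [hE3def]; split
    · positivity
    · exact le_refl 0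
  -- pointwise bound
  have hpt : ∀ p : ℕ × ℕ, |Tfun n d p - N^2 * Ffun p| ≤ E1 p + E2 p + E3 p := by
    intro p
    by_cases hc : p.2 < p.1 ∧ 1 ≤ p.2
    · by_cases hg : Nat.gcd p.1 p.2 = 1
      · have eT : Tfun n d p = (if 1 < Ybound n d p.1 p.2 then
            (1/(p.1:ℝ)) * (Aterm n d p.1 * Ybound n d p.1 p.2
              + Bterm p.1 p.2 * (Ybound n d p.1 p.2)^2/2) else 0) := by
          simp only [Tfun, hc.1, hc.2, hg, true_and]
        have eF : Ffun p = (2*(p.1:ℝ)+p.2) / (2*(p.1:ℝ)^2*((p.1:ℝ)+p.2)^2) := by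
          simp only [Ffun, hc.1, hc.2, hg, and_self, if_true]
        have eE1 : E1 p = (if (d:ℝ)*(p.1:ℝ)^2 < N then (d:ℝ)*(N/(p.1:ℝ)) else 0) := by
          simp only [hE1def, hc.1, hc.2, true_and]
        have eE2 : E2 p = (if N ≤ 2*((d:ℝ)*(p.1:ℝ)^2) then (7/2)*(N^2/(p.1:ℝ)^3) else 0) := by
          simp only [hE2def, hc.1, hc.2, true_and]
        have eE3 : E3 p = (if N ≤ 2*(p.1:ℝ) then (3/2)*(N^2/(p.1:ℝ)^3) else 0) := by
          simp only [hE3def, hc.1, hc.2, true_and]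
        rw [eT, eF, eE1, eE2, eE3]
        exact pointwise n d p.1 p.2 hd hn hc.2 hc.1
      · have eT : Tfun n d p = 0 := by
          simp only [Tfun]
          rw [if_neg (by tauto)]
        have eF : Ffun p = 0 := by
          simp only [Ffun]
          rw [if_neg (by tauto)]
        rw [eT, eF]
        simp only [mul_zero, sub_zero, abs_zero]
        have := hE1nn p; have := hE2nn p; have := hE3nn p
        linarith
    · have eT : Tfun n d p = 0 := by
        simp only [Tfun]
        rw [if_neg (by tauto)]
      have eF : Ffun p = 0 := by
        simp only [Ffun]
        rw [if_neg (by tauto)]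
      rw [eT, eF]
      simp only [mul_zero, sub_zero, abs_zero]
      have := hE1nn p; have := hE2nn p; have := hE3nn p
      linarith
  -- summability of Tfun
  have hT : Summable (Tfun n d) := by
    apply summable_of_ne_finset_zero (s := Finset.range (n+1) ×ˢ Finset.range (n+1))
    intro p hp
    simp only [Tfun]
    rw [if_neg]
    rintro ⟨h1, h2, h3, h4⟩
    apply hp
    have hy1 : (1:ℝ) ≤ (p.2:ℝ) := by exact_mod_cast h2
    have hx1 : (1:ℝ) ≤ (p.1:ℝ) := by
      have : 1 ≤ p.1 := by omega
      exact_mod_cast this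
    have hden : (0:ℝ) < (d:ℝ)*((p.1:ℝ)+(p.2:ℝ)) := by positivity
    have h5 : 1 < (n:ℝ)/((d:ℝ)*((p.1:ℝ)+(p.2:ℝ))) :=
      lt_of_lt_of_le h4 (min_le_left _ _)
    have h6 : (d:ℝ)*((p.1:ℝ)+(p.2:ℝ)) < (n:ℝ) := (one_lt_div hden).mp h5
    have h7 : (p.1:ℝ) ≤ (d:ℝ)*((p.1:ℝ)+(p.2:ℝ)) := by
      have : (p.1:ℝ) + (p.2:ℝ) ≤ (d:ℝ)*((p.1:ℝ)+(p.2:ℝ)) :=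
        le_mul_of_one_le_left (by positivity) hdR
      linarith
    have h8 : (p.2:ℝ) ≤ (d:ℝ)*((p.1:ℝ)+(p.2:ℝ)) := by
      have : (p.1:ℝ) + (p.2:ℝ) ≤ (d:ℝ)*((p.1:ℝ)+(p.2:ℝ)) :=
        le_mul_of_one_le_left (by positivity) hdR
      linarith
    have hx : p.1 < n := by
      have : (p.1:ℝ) < (n:ℝ) := by linarith
      exact_mod_cast this
    have hy : p.2 < n := by
      have : (p.2:ℝ) < (n:ℝ) := by linarith
      exact_mod_cast this
    simp only [Finset.mem_product, Finset.mem_range]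
    omega
  -- summability of Ffun
  have hFsupp : ∀ p : ℕ×ℕ, Ffun p ≠ 0 →
      1 ≤ p.2 ∧ p.2 < p.1 ∧ (1:ℝ) ≤ (p.1:ℝ) ∧ Ffun p ≤ (3/2)/(p.1:ℝ)^3 := by
    intro p hne
    have hcond : p.2 < p.1 ∧ 1 ≤ p.2 ∧ Nat.gcd p.1 p.2 = 1 := by
      by_contra hcon
      exact hne (by simp only [Ffun]; rw [if_neg hcon])
    have hx1 : (1:ℝ) ≤ (p.1:ℝ) := by
      have : 1 ≤ p.1 := by omega
      exact_mod_cast this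
    refine ⟨hcond.2.1, hcond.1, hx1, ?_⟩
    have eF : Ffun p = (2*(p.1:ℝ)+p.2) / (2*(p.1:ℝ)^2*((p.1:ℝ)+p.2)^2) := by
      simp only [Ffun]
      rw [if_pos hcond]
    rw [eF]
    exact Fval_le p.1 p.2 hcond.2.1 hcond.1
  have hFnn : ∀ p, 0 ≤ Ffun p := by
    intro p
    simp only [Ffun]
    split
    · positivity
    · exact le_refl 0
  have hF : Summable Ffun :=
    summable_of_sum_le (fun p => hFnn p)
      (fun u => sum_bound_tail Ffun (3/2) 1 (by norm_num) one_pos hFsupp u)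
  have hFN : Summable (fun p => N^2 * Ffun p) := hF.mul_left _
  have hTF : Summable (fun p : ℕ×ℕ => Tfun n d p - N^2 * Ffun p) := hT.sub hFN
  have hTFabs : Summable (fun p : ℕ×ℕ => |Tfun n d p - N^2 * Ffun p|) := hTF.abs
  -- E summability and bounds
  have hE1supp : ∀ p : ℕ×ℕ, E1 p ≠ 0 →
      1 ≤ p.2 ∧ p.2 < p.1 ∧ (p.1:ℝ) ≤ sq/(d:ℝ) ∧ E1 p ≤ ((d:ℝ)*N)/(p.1:ℝ) := by
    intro p hne
    have hcond : p.2 < p.1 ∧ 1 ≤ p.2 ∧ (d:ℝ)*(p.1:ℝ)^2 < N := by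
      by_contra hcon
      exact hne (by simp only [hE1def]; rw [if_neg hcon])
    obtain ⟨h1, h2, h3⟩ := hcond
    have hXR : (p.1:ℝ) ≤ sq/(d:ℝ) := by
      rw [le_div_iff₀ hd0R]
      have h4 : ((d:ℝ)*(p.1:ℝ))^2 ≤ (n:ℝ) := by
        have : (d:ℝ)*((d:ℝ)*(p.1:ℝ)^2) ≤ (d:ℝ)*N := mul_le_mul_of_nonneg_left h3.le hd0R.le
        have e : (d:ℝ)*N = (n:ℝ) := by
          rw [hNdef]; field_simp
        calc ((d:ℝ)*(p.1:ℝ))^2 = (d:ℝ)*((d:ℝ)*(p.1:ℝ)^2) := by ring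
          _ ≤ (d:ℝ)*N := this
          _ = (n:ℝ) := e
      have h5 : (d:ℝ)*(p.1:ℝ) = Real.sqrt (((d:ℝ)*(p.1:ℝ))^2) :=
        (Real.sqrt_sq (by positivity)).symm
      rw [show (p.1:ℝ)*(d:ℝ) = (d:ℝ)*(p.1:ℝ) by ring, h5, hsqdef]
      exact Real.sqrt_le_sqrt h4
    refine ⟨h2, h1, hXR, ?_⟩
    have e : E1 p = (d:ℝ)*(N/(p.1:ℝ)) := by
      simp only [hE1def]
      rw [if_pos ⟨h1, h2, h3⟩]
    rw [e]
    exact le_of_eq (by ring)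
  have hE1sum : ∀ u : Finset (ℕ×ℕ), ∑ p ∈ u, E1 p ≤ ((d:ℝ)*N)*(sq/(d:ℝ)) :=
    fun u => sum_bound_box E1 ((d:ℝ)*N) (sq/(d:ℝ)) (by positivity) (by positivity) hE1supp u
  have hE1b : ((d:ℝ)*N)*(sq/(d:ℝ)) = (n:ℝ)*sq/(d:ℝ) := by
    rw [hNdef]; field_simp
  have hE1s : Summable E1 := summable_of_sum_le (fun p => hE1nn p) hE1sum
  have hE1t : ∑' p, E1 p ≤ (n:ℝ)*sq/(d:ℝ) := by
    rw [← hE1b]; exact Summable.tsum_le_of_sum_le hE1s hE1sum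
  have hE2supp : ∀ p : ℕ×ℕ, E2 p ≠ 0 →
      1 ≤ p.2 ∧ p.2 < p.1 ∧ sq/(2*(d:ℝ)) ≤ (p.1:ℝ) ∧ E2 p ≤ ((7/2)*N^2)/(p.1:ℝ)^3 := by
    intro p hne
    have hcond : p.2 < p.1 ∧ 1 ≤ p.2 ∧ N ≤ 2*((d:ℝ)*(p.1:ℝ)^2) := by
      by_contra hcon
      exact hne (by simp only [hE2def]; rw [if_neg hcon])
    obtain ⟨h1, h2, h3⟩ := hcond
    have hXr : sq/(2*(d:ℝ)) ≤ (p.1:ℝ) := by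
      rw [div_le_iff₀ (by positivity)]
      have h4 : (n:ℝ) ≤ (2*(d:ℝ)*(p.1:ℝ))^2 := by
        have h5 : (d:ℝ)*N ≤ (d:ℝ)*(2*((d:ℝ)*(p.1:ℝ)^2)) := mul_le_mul_of_nonneg_left h3 hd0R.le
        have e : (d:ℝ)*N = (n:ℝ) := by rw [hNdef]; field_simp
        have h6 : (d:ℝ)*(2*((d:ℝ)*(p.1:ℝ)^2)) ≤ (2*(d:ℝ)*(p.1:ℝ))^2 := by
          have h7 : (0:ℝ) ≤ ((d:ℝ)*(p.1:ℝ))^2 := by positivity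
          have e2 : (2*(d:ℝ)*(p.1:ℝ))^2 - (d:ℝ)*(2*((d:ℝ)*(p.1:ℝ)^2)) = 2*(((d:ℝ)*(p.1:ℝ))^2) := by
            ring
          linarith
        linarith [e ▸ h5]
      have h8 : sq ≤ 2*(d:ℝ)*(p.1:ℝ) := by
        rw [hsqdef, show 2*(d:ℝ)*(p.1:ℝ) = Real.sqrt ((2*(d:ℝ)*(p.1:ℝ))^2) from
          (Real.sqrt_sq (by positivity)).symm]
        exact Real.sqrt_le_sqrt h4
      linarith [h8]
    refine ⟨h2, h1, hXr, ?_⟩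
    have e : E2 p = (7/2)*(N^2/(p.1:ℝ)^3) := by
      simp only [hE2def]
      rw [if_pos ⟨h1, h2, h3⟩]
    rw [e]
    exact le_of_eq (by ring)
  have hE2sum : ∀ u : Finset (ℕ×ℕ), ∑ p ∈ u, E2 p ≤ 2*((7/2)*N^2)/(sq/(2*(d:ℝ))) :=
    fun u => sum_bound_tail E2 ((7/2)*N^2) (sq/(2*(d:ℝ))) (by positivity) (by positivity)
      hE2supp u
  have hE2b : 2*((7/2)*N^2)/(sq/(2*(d:ℝ))) = 14*((n:ℝ)*sq/(d:ℝ)) := by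
    rw [hNdef]
    have hsne : sq ≠ 0 := ne_of_gt hsq0
    have hdne : (d:ℝ) ≠ 0 := ne_of_gt hd0R
    field_simp
    linear_combination (-14) * hsqsq
  have hE2s : Summable E2 := summable_of_sum_le (fun p => hE2nn p) hE2sum
  have hE2t : ∑' p, E2 p ≤ 14*((n:ℝ)*sq/(d:ℝ)) := by
    rw [← hE2b]; exact Summable.tsum_le_of_sum_le hE2s hE2sum
  have hE3supp : ∀ p : ℕ×ℕ, E3 p ≠ 0 →
      1 ≤ p.2 ∧ p.2 < p.1 ∧ N/2 ≤ (p.1:ℝ) ∧ E3 p ≤ ((3/2)*N^2)/(p.1:ℝ)^3 := by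
    intro p hne
    have hcond : p.2 < p.1 ∧ 1 ≤ p.2 ∧ N ≤ 2*(p.1:ℝ) := by
      by_contra hcon
      exact hne (by simp only [hE3def]; rw [if_neg hcon])
    obtain ⟨h1, h2, h3⟩ := hcond
    refine ⟨h2, h1, by linarith, ?_⟩
    have e : E3 p = (3/2)*(N^2/(p.1:ℝ)^3) := by
      simp only [hE3def]
      rw [if_pos ⟨h1, h2, h3⟩]
    rw [e]
    exact le_of_eq (by ring)
  have hE3sum : ∀ u : Finset (ℕ×ℕ), ∑ p ∈ u, E3 p ≤ 2*((3/2)*N^2)/(N/2) :=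
    fun u => sum_bound_tail E3 ((3/2)*N^2) (N/2) (by positivity) (by positivity) hE3supp u
  have hE3b : 2*((3/2)*N^2)/(N/2) ≤ 6*((n:ℝ)*sq/(d:ℝ)) := by
    have e : 2*((3/2)*N^2)/(N/2) = 6*N := by
      field_simp
      ring
    rw [e, hNdef]
    have h9 : (n:ℝ) ≤ (n:ℝ)*sq := le_mul_of_one_le_right hn0R.le hsq1
    have h10 := (div_le_div_iff_of_pos_right hd0R).mpr h9
    linarith
  have hE3s : Summable E3 := summable_of_sum_le (fun p => hE3nn p) hE3sum
  have hE3t : ∑' p, E3 p ≤ 6*((n:ℝ)*sq/(d:ℝ)) :=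
    le_trans (Summable.tsum_le_of_sum_le hE3s hE3sum) hE3b
  -- assemble
  have hEsum : Summable (fun p : ℕ×ℕ => E1 p + E2 p + E3 p) := (hE1s.add hE2s).add hE3s
  have e0 : ((n:ℝ)/d)^2 * constC = N^2 * ∑' p, Ffun p := by
    rw [hNdef]
    congr 1
  have key : (∑' p : ℕ×ℕ, Tfun n d p) - N^2 * (∑' p, Ffun p)
      = ∑' p : ℕ×ℕ, (Tfun n d p - N^2 * Ffun p) := by
    rw [Summable.tsum_sub hT hFN, tsum_mul_left]
  rw [e0, key]
  calc |∑' p : ℕ×ℕ, (Tfun n d p - N^2 * Ffun p)|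
      ≤ ∑' p : ℕ×ℕ, |Tfun n d p - N^2 * Ffun p| := by
        have := norm_tsum_le_tsum_norm (f := fun p : ℕ×ℕ => Tfun n d p - N^2 * Ffun p)
          (by simpa [Real.norm_eq_abs] using hTFabs)
        simpa [Real.norm_eq_abs] using this
    _ ≤ ∑' p : ℕ×ℕ, (E1 p + E2 p + E3 p) := Summable.tsum_le_tsum hpt hTFabs hEsum
    _ = (∑' p, E1 p) + (∑' p, E2 p) + (∑' p, E3 p) := by
        rw [Summable.tsum_add (hE1s.add hE2s) hE3s, Summable.tsum_add hE1s hE2s]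
    _ ≤ (n:ℝ)*sq/(d:ℝ) + 14*((n:ℝ)*sq/(d:ℝ)) + 6*((n:ℝ)*sq/(d:ℝ)) := by
        linarith [hE1t, hE2t, hE3t]
    _ = 21 * ((n:ℝ)*sq/(d:ℝ)) := by ring

theorem stmt_4 :
    ∀ ε : ℝ, 0 < ε → ∃ K : ℝ, 0 < K ∧ ∀ n : ℕ, 0 < n →
      |Gone n - constC * (n : ℝ) ^ 2 * ∑ d ∈ n.divisors, 1 / (d : ℝ) ^ 2|
        ≤ K * (n : ℝ) ^ ((3 : ℝ) / 2 + ε) := by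
  intro ε hε
  have hKpos : 0 < 21*(1+1/ε) := by
    have h1 : 0 < 1/ε := by positivity
    linarith
  refine ⟨21*(1+1/ε), hKpos, ?_⟩
  intro n hn
  have hnR : (1:ℝ) ≤ (n:ℝ) := by exact_mod_cast hn
  have hn0R : (0:ℝ) < (n:ℝ) := by linarith
  set sq : ℝ := Real.sqrt n with hsqdef
  have hsq0 : 0 < sq := Real.sqrt_pos.mpr hn0R
  have hsq1 : 1 ≤ sq := by
    rw [hsqdef, show (1:ℝ) = Real.sqrt 1 by rw [Real.sqrt_one]]
    exact Real.sqrt_le_sqrt hnR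
  have hGone : Gone n = ∑ d ∈ n.divisors, ∑' p : ℕ × ℕ, Tfun n d p := rfl
  have hmain : constC * (n:ℝ)^2 * ∑ d ∈ n.divisors, 1/(d:ℝ)^2
      = ∑ d ∈ n.divisors, ((n:ℝ)/d)^2 * constC := by
    rw [Finset.mul_sum]
    apply Finset.sum_congr rfl
    intro d hd
    have hd0 : (0:ℝ) < (d:ℝ) := by exact_mod_cast Nat.pos_of_mem_divisors hd
    field_simp
  rw [hGone, hmain, ← Finset.sum_sub_distrib]
  have hrpow1 : 1 ≤ (n:ℝ)^ε := Real.one_le_rpow hnR hε.le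
  have hlog : Real.log n ≤ (n:ℝ)^ε/ε := by
    have h1 := Real.log_le_sub_one_of_pos (Real.rpow_pos_of_pos hn0R ε)
    rw [Real.log_rpow hn0R ε] at h1
    rw [le_div_iff₀ hε]
    linarith
  calc |∑ d ∈ n.divisors, ((∑' p : ℕ × ℕ, Tfun n d p) - ((n:ℝ)/d)^2 * constC)|
      ≤ ∑ d ∈ n.divisors, |(∑' p : ℕ × ℕ, Tfun n d p) - ((n:ℝ)/d)^2 * constC| :=
        Finset.abs_sum_le_sum_abs _ _
    _ ≤ ∑ d ∈ n.divisors, 21 * ((n:ℝ) * sq / d) := by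
        apply Finset.sum_le_sum
        intro d hd
        exact perd n d hn (Nat.pos_of_mem_divisors hd) ((Nat.mem_divisors.mp hd).1)
    _ = 21*((n:ℝ)*sq) * ∑ d ∈ n.divisors, 1/(d:ℝ) := by
        rw [Finset.mul_sum]
        apply Finset.sum_congr rfl
        intro d _
        rw [mul_one_div]
        ring
    _ ≤ 21*((n:ℝ)*sq) * (1 + Real.log n) := by
        apply mul_le_mul_of_nonneg_left (divisors_inv_sum n hn) (by positivity)
    _ ≤ 21*((n:ℝ)*sq) * ((1+1/ε)*(n:ℝ)^ε) := by
        apply mul_le_mul_of_nonneg_left _ (by positivity)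
        have e : (1+1/ε)*(n:ℝ)^ε = (n:ℝ)^ε + (1/ε)*(n:ℝ)^ε := by ring
        rw [e]
        have e2 : (n:ℝ)^ε/ε = (1/ε)*(n:ℝ)^ε := by ring
        rw [e2] at hlog
        linarith
    _ = 21*(1+1/ε) * (n:ℝ)^((3:ℝ)/2+ε) := by
        rw [Real.rpow_add hn0R]
        have e1 : (n:ℝ)^((3:ℝ)/2) = (n:ℝ)*sq := by
          rw [show (3:ℝ)/2 = 1 + 1/2 by norm_num, Real.rpow_add hn0R, Real.rpow_one,
            hsqdef, Real.sqrt_eq_rpow]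
        rw [e1]
        ring
end

section
/- Let φ be a real number with 0 < |φ| ≤ π. Then for every integer l ≥ 1, | Σ_{j=1}^{l−1} j·exp(i·φ·j) | ≤ π²/(2·φ²) + (l−1)·π/(2·|φ|). -/
theorem stmt_8 (φ : ℝ) (hφ : 0 < |φ|) (hφπ : |φ| ≤ Real.pi) :
    ∀ l : ℕ, 1 ≤ l →
      ‖∑ j ∈ Finset.Ico 1 l, (j : ℂ) * Complex.exp (Complex.I * φ * j)‖
        ≤ Real.pi ^ 2 / (2 * φ ^ 2) + ((l : ℝ) - 1) * Real.pi / (2 * |φ|) := by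
  intro l hl
  obtain ⟨m, rfl⟩ := Nat.exists_eq_add_of_le hl
  clear hl
  have hπ := Real.pi_pos
  have hπ2 : (0:ℝ) < Real.pi ^ 2 := by positivity
  have hφ2 : (0:ℝ) < φ ^ 2 := by
    have : φ ≠ 0 := fun h => by simp [h] at hφ
    positivity
  set z : ℂ := Complex.exp (Complex.I * φ) with hzdef
  have hz : ∀ j : ℕ, Complex.exp (Complex.I * φ * (j : ℂ)) = z ^ j := fun j => by
    rw [hzdef, ← Complex.exp_nat_mul]; ring_nf
  have habs1 : ‖z‖ = 1 := by
    rw [hzdef, mul_comm, Complex.norm_exp_ofReal_mul_I]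
  -- lower bound on |1 - z|
  have hcos : Real.cos φ ≤ 1 - 2 / Real.pi ^ 2 * φ ^ 2 :=
    Real.cos_le_one_sub_mul_cos_sq hφπ
  have hsq : (‖1 - z‖) ^ 2 = 2 - 2 * Real.cos φ := by
    rw [hzdef, Complex.sq_norm, mul_comm Complex.I (φ:ℂ), Complex.exp_mul_I]
    simp [Complex.normSq_apply, Complex.cos_ofReal_re, Complex.sin_ofReal_re]
    nlinarith [Real.sin_sq_add_cos_sq φ]
  have h4 : 4 * φ ^ 2 ≤ (2 - 2 * Real.cos φ) * Real.pi ^ 2 := by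
    have h := mul_le_mul_of_nonneg_right hcos hπ2.le
    have hcan : 2 / Real.pi ^ 2 * φ ^ 2 * Real.pi ^ 2 = 2 * φ ^ 2 := by field_simp
    nlinarith [h]
  have ha : 2 * |φ| / Real.pi ≤ ‖1 - z‖ := by
    have h1 : (2 * |φ| / Real.pi) ^ 2 ≤ (‖1 - z‖) ^ 2 := by
      rw [hsq]
      have hx : (2 * |φ| / Real.pi) ^ 2 = 4 * φ ^ 2 / Real.pi ^ 2 := by
        rw [div_pow, mul_pow, sq_abs]; norm_num
      rw [hx, div_le_iff₀ hπ2]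
      nlinarith [h4]
    have hnn : (0:ℝ) ≤ 2 * |φ| / Real.pi := by positivity
    nlinarith [norm_nonneg (1 - z),
      sq_nonneg (2 * |φ| / Real.pi - ‖1 - z‖)]
  have hapos : 0 < ‖1 - z‖ := lt_of_lt_of_le (by positivity) ha
  -- the algebraic identity
  have key : (1 - z) ^ 2 * (∑ j ∈ Finset.Ico 1 (1 + m), (j : ℂ) * z ^ j)
      = z * (1 - z ^ m) - (m : ℂ) * z ^ (m + 1) * (1 - z) := by
    induction m with
    | zero => simp
    | succ n ih =>
      have h1 : 1 + (n + 1) = (1 + n) + 1 := by ring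
      rw [h1, Finset.sum_Ico_succ_top (by omega), mul_add, ih]
      push_cast
      ring
  have hsum : ∑ j ∈ Finset.Ico 1 (1 + m), (j : ℂ) * Complex.exp (Complex.I * φ * (j : ℂ))
      = ∑ j ∈ Finset.Ico 1 (1 + m), (j : ℂ) * z ^ j := by
    refine Finset.sum_congr rfl fun j _ => ?_
    rw [hz j]
  rw [hsum]
  have habsz : ∀ k : ℕ, ‖z ^ k‖ = 1 := fun k => by
    rw [norm_pow, habs1, one_pow]
  have hS : ‖∑ j ∈ Finset.Ico 1 (1 + m), (j : ℂ) * z ^ j‖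
      = ‖z * (1 - z ^ m) - (m : ℂ) * z ^ (m + 1) * (1 - z)‖
        / (‖1 - z‖) ^ 2 := by
    rw [← key, norm_mul, norm_pow]
    field_simp
  rw [hS]
  have hnum : ‖z * (1 - z ^ m) - (m : ℂ) * z ^ (m + 1) * (1 - z)‖
      ≤ 2 + (m : ℝ) * ‖1 - z‖ := by
    calc ‖z * (1 - z ^ m) - (m : ℂ) * z ^ (m + 1) * (1 - z)‖
        ≤ ‖z * (1 - z ^ m)‖ + ‖(m : ℂ) * z ^ (m + 1) * (1 - z)‖ :=
          norm_sub_le _ _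
      _ ≤ 2 + (m : ℝ) * ‖1 - z‖ := by
          rw [norm_mul, habs1, one_mul, norm_mul, norm_mul, habsz, Complex.norm_natCast]
          have h1 : ‖1 - z ^ m‖ ≤ 2 := by
            calc ‖1 - z ^ m‖ ≤ ‖(1:ℂ)‖ + ‖z ^ m‖ :=
                norm_sub_le 1 (z ^ m)
              _ = 2 := by rw [habsz]; norm_num
          nlinarith [h1]
  have hinv : 1 / ‖1 - z‖ ≤ Real.pi / (2 * |φ|) := by
    rw [div_le_div_iff₀ hapos (by positivity)]
    calc 1 * (2 * |φ|) = 2 * |φ| / Real.pi * Real.pi := by field_simp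
      _ ≤ ‖1 - z‖ * Real.pi := mul_le_mul_of_nonneg_right ha hπ.le
      _ = Real.pi * ‖1 - z‖ := mul_comm _ _
  have h2a : 2 / (‖1 - z‖) ^ 2 ≤ Real.pi ^ 2 / (2 * φ ^ 2) := by
    rw [div_le_div_iff₀ (by positivity) (by positivity), hsq]
    nlinarith [h4]
  have hma : (m : ℝ) / ‖1 - z‖ ≤ (m : ℝ) * Real.pi / (2 * |φ|) := by
    have h := mul_le_mul_of_nonneg_left hinv (Nat.cast_nonneg m : (0:ℝ) ≤ m)
    calc (m : ℝ) / ‖1 - z‖ = (m : ℝ) * (1 / ‖1 - z‖) := by ring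
      _ ≤ (m : ℝ) * (Real.pi / (2 * |φ|)) := h
      _ = (m : ℝ) * Real.pi / (2 * |φ|) := by ring
  have hfin : ((1 + m : ℕ) : ℝ) - 1 = (m : ℝ) := by push_cast; ring
  rw [hfin]
  calc ‖z * (1 - z ^ m) - (m : ℂ) * z ^ (m + 1) * (1 - z)‖
        / (‖1 - z‖) ^ 2
      ≤ (2 + (m : ℝ) * ‖1 - z‖) / (‖1 - z‖) ^ 2 := by gcongr
    _ = 2 / (‖1 - z‖) ^ 2 + (m : ℝ) / ‖1 - z‖ := by
        field_simp
    _ ≤ Real.pi ^ 2 / (2 * φ ^ 2) + (m : ℝ) * Real.pi / (2 * |φ|) := add_le_add h2a hma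
end
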